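/- arXiv:2605.10526 — 6 statements merged into one kernel-verified Lean document; each statement's English description precedes it below -/
import Mathlib

section
/- Let G = (V, E) be a simple graph on a finite vertex set V with nonnegative edge weights w_e ≥ 0, and let π be a distribution over subsets of V with marginals q_u and pairwise marginals q_{uv}. Then for every x : V → ℝ with 0 ≤ x_v ≤ 1 for all v ∈ V (in particular for every x in the matroid polytope P_f ⊆ [0,1]^V), F^π(x) ≥ (3/4)·L^π(x); moreover, if x is {0,1}-valued then F^π(x) = L^π(x). -/
open Finset

/-- The marginal probability that `u` is interdicted under distribution `π`. -/
def marg {V : Type*} [Fintype V] [DecidableEq V] (π : Finset V → ℝ) (u : V) : ℝ :=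
  ∑ S ∈ univ.filter (fun S : Finset V => u ∈ S), π S

/-- The pairwise marginal probability that both `u` and `v` are interdicted under `π`. -/
def marg2 {V : Type*} [Fintype V] [DecidableEq V] (π : Finset V → ℝ) (u v : V) : ℝ :=
  ∑ S ∈ univ.filter (fun S : Finset V => u ∈ S ∧ v ∈ S), π S

/-- The LP objective `L^π(x)` of the follower's relaxed problem. -/
def Lfun {V : Type*} [Fintype V] [DecidableEq V] (E : Finset (V × V)) (w : V × V → ℝ)
    (π : Finset V → ℝ) (x : V → ℝ) : ℝ :=
  ∑ e ∈ E,
    (x e.1 * (w e * (1 - marg π e.1)) + x e.2 * (w e * (1 - marg π e.2))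
      + max 0 (x e.1 + x e.2 - 1) *
        (w e * (1 - marg2 π e.1 e.2) - w e * (1 - marg π e.1) - w e * (1 - marg π e.2)))

/-- The auxiliary multilinear function `F^π(x)`. -/
def Ffun {V : Type*} [Fintype V] [DecidableEq V] (E : Finset (V × V)) (w : V × V → ℝ)
    (π : Finset V → ℝ) (x : V → ℝ) : ℝ :=
  ∑ e ∈ E,
    (x e.1 * (w e * (1 - marg π e.1)) + x e.2 * (w e * (1 - marg π e.2))
      + x e.1 * x e.2 *
        (w e * (1 - marg2 π e.1 e.2) - w e * (1 - marg π e.1) - w e * (1 - marg π e.2)))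

lemma marg2_le_marg_left {V : Type*} [Fintype V] [DecidableEq V] (π : Finset V → ℝ)
    (hpos : ∀ S : Finset V, 0 ≤ π S) (u v : V) : marg2 π u v ≤ marg π u := by
  apply Finset.sum_le_sum_of_subset_of_nonneg
  · intro S hS
    simp only [mem_filter, mem_univ, true_and] at *
    exact hS.1
  · intro S _ _; exact hpos S

lemma marg2_le_marg_right {V : Type*} [Fintype V] [DecidableEq V] (π : Finset V → ℝ)
    (hpos : ∀ S : Finset V, 0 ≤ π S) (u v : V) : marg2 π u v ≤ marg π v := by
  apply Finset.sum_le_sum_of_subset_of_nonneg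
  · intro S hS
    simp only [mem_filter, mem_univ, true_and] at *
    exact hS.2
  · intro S _ _; exact hpos S

lemma incl_excl {V : Type*} [Fintype V] [DecidableEq V] (π : Finset V → ℝ)
    (hpos : ∀ S : Finset V, 0 ≤ π S) (hsum : ∑ S : Finset V, π S = 1) (u v : V) :
    marg π u + marg π v - marg2 π u v ≤ 1 := by
  have hie : marg π u + marg π v =
      (∑ S ∈ (univ.filter (fun S : Finset V => u ∈ S)) ∪
        (univ.filter (fun S : Finset V => v ∈ S)), π S) + marg2 π u v := by
    rw [marg, marg, marg2]
    rw [← Finset.sum_union_inter]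
    congr 1
    rw [Finset.filter_and]
  have hle : (∑ S ∈ (univ.filter (fun S : Finset V => u ∈ S)) ∪
      (univ.filter (fun S : Finset V => v ∈ S)), π S) ≤ 1 := by
    rw [← hsum]
    apply Finset.sum_le_sum_of_subset_of_nonneg (Finset.subset_univ _)
    intro S _ _; exact hpos S
  linarith

lemma key_ineq (a b A B C : ℝ) (ha : 0 ≤ a) (ha1 : a ≤ 1) (hb : 0 ≤ b) (hb1 : b ≤ 1)
    (hC : C ≤ 0) (hA : -C ≤ A) (hB : -C ≤ B) :
    (3 / 4) * (a * A + b * B + max 0 (a + b - 1) * C) ≤ a * A + b * B + a * b * C := by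
  rcases le_or_gt (a + b) 1 with h | h
  · rw [max_eq_left (by linarith)]
    nlinarith [mul_nonneg ha (by linarith : (0:ℝ) ≤ A + C), mul_nonneg hb (by linarith : (0:ℝ) ≤ B + C),
      mul_nonneg (mul_nonneg ha hb) (by linarith : (0:ℝ) ≤ -C),
      mul_nonneg (mul_nonneg (add_nonneg ha hb) (by linarith : (0:ℝ) ≤ 1 - a - b)) (by linarith : (0:ℝ) ≤ -C),
      mul_nonneg (sq_nonneg (a - b)) (by linarith : (0:ℝ) ≤ -C)]
  · rw [max_eq_right (by linarith)]
    nlinarith [mul_nonneg ha (by linarith : (0:ℝ) ≤ A + C), mul_nonneg hb (by linarith : (0:ℝ) ≤ B + C),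
      mul_nonneg (mul_nonneg (by linarith : (0:ℝ) ≤ a + b - 1) (by linarith : (0:ℝ) ≤ 3 - a - b)) (by linarith : (0:ℝ) ≤ -C),
      mul_nonneg (sq_nonneg (a - b)) (by linarith : (0:ℝ) ≤ -C)]

/-- `F^π(x) ≥ (3/4)·L^π(x)` for every `x ∈ [0,1]^V`, with equality `F^π(x) = L^π(x)`
whenever `x` is {0,1}-valued. Edges are given as a finset `E` of ordered pairs,
each edge `e = uv` appearing once. -/
theorem F_ge_three_quarters_L {V : Type*} [Fintype V] [DecidableEq V]
    (E : Finset (V × V)) (w : V × V → ℝ) (hw : ∀ e ∈ E, 0 ≤ w e)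
    (hloop : ∀ e ∈ E, e.1 ≠ e.2) (hori : ∀ e ∈ E, (e.2, e.1) ∉ E)
    (π : Finset V → ℝ) (hpos : ∀ S : Finset V, 0 ≤ π S)
    (hsum : ∑ S : Finset V, π S = 1)
    (x : V → ℝ) (hx : ∀ v : V, 0 ≤ x v ∧ x v ≤ 1) :
    (3 / 4) * Lfun E w π x ≤ Ffun E w π x ∧
    ((∀ v : V, x v = 0 ∨ x v = 1) → Ffun E w π x = Lfun E w π x) := by
  constructor
  · rw [Lfun, Ffun, Finset.mul_sum]
    apply Finset.sum_le_sum
    intro e he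
    set u := e.1
    set v := e.2
    have hCle : w e * (1 - marg2 π u v) - w e * (1 - marg π u) - w e * (1 - marg π v) ≤ 0 := by
      have := incl_excl π hpos hsum u v
      nlinarith [hw e he]
    have hA : -(w e * (1 - marg2 π u v) - w e * (1 - marg π u) - w e * (1 - marg π v))
        ≤ w e * (1 - marg π u) := by
      have := marg2_le_marg_right π hpos u v
      nlinarith [hw e he]
    have hB : -(w e * (1 - marg2 π u v) - w e * (1 - marg π u) - w e * (1 - marg π v))
        ≤ w e * (1 - marg π v) := by
      have := marg2_le_marg_left π hpos u v
      nlinarith [hw e he]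
    exact key_ineq (x u) (x v) _ _ _ (hx u).1 (hx u).2 (hx v).1 (hx v).2 hCle hA hB
  · intro h01
    rw [Lfun, Ffun]
    apply Finset.sum_congr rfl
    intro e _
    have h : x e.1 * x e.2 = max 0 (x e.1 + x e.2 - 1) := by
      rcases h01 e.1 with h1 | h1 <;> rcases h01 e.2 with h2 | h2 <;>
        rw [h1, h2] <;> norm_num
    rw [h]
end

section
/- Let x_u, x_v, q_u, q_v, q_{uv} be real numbers with 0 ≤ x_u, 0 ≤ x_v, x_u + x_v ≤ 1, 0 ≤ q_u ≤ 1, 0 ≤ q_v ≤ 1, and q_u + q_v − 1 ≤ q_{uv} ≤ min(q_u, q_v). Then x_u·x_v·(1 − q_u − q_v + q_{uv}) ≤ (x_u(1 − q_u) + x_v(1 − q_v))/4. -/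
/-- Per-edge estimate in Case 1 (`x_u + x_v ≤ 1`) of the proof that `F ≥ (3/4)·L`:
`x_u·x_v·(1 − q_u − q_v + q_{uv}) ≤ (x_u(1 − q_u) + x_v(1 − q_v))/4`. -/
theorem case1_estimate (xu xv qu qv quv : ℝ)
    (hxu : 0 ≤ xu) (hxv : 0 ≤ xv) (hsum : xu + xv ≤ 1)
    (hqu0 : 0 ≤ qu) (hqu1 : qu ≤ 1) (hqv0 : 0 ≤ qv) (hqv1 : qv ≤ 1)
    (hlow : qu + qv - 1 ≤ quv) (hup : quv ≤ min qu qv) :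
    xu * xv * (1 - qu - qv + quv) ≤ (xu * (1 - qu) + xv * (1 - qv)) / 4 := by
  have h1 : quv ≤ qu := le_trans hup (min_le_left _ _)
  have h2 : quv ≤ qv := le_trans hup (min_le_right _ _)
  obtain ⟨t, ht⟩ : ∃ t : ℝ, t = 1 - qu - qv + quv := ⟨_, rfl⟩
  rw [← ht]
  rcases le_total t 0 with hts | hts
  · have : xu * xv * t ≤ 0 := mul_nonpos_of_nonneg_of_nonpos (mul_nonneg hxu hxv) hts
    have hr : 0 ≤ xu * (1 - qu) + xv * (1 - qv) := by
      have := mul_nonneg hxu (sub_nonneg.2 hqu1)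
      have := mul_nonneg hxv (sub_nonneg.2 hqv1)
      linarith
    linarith
  · -- t ≥ 0; t ≤ 1 - qu and t ≤ 1 - qv
    have hta : t ≤ 1 - qu := by linarith [ht.le, ht.ge]
    have htb : t ≤ 1 - qv := by linarith [ht.le, ht.ge]
    rcases le_total qu qv with h | h
    · -- min(1-qu,1-qv) = 1-qv =: b
      have key1 : xu * xv * t ≤ xu * xv * (1 - qv) :=
        mul_le_mul_of_nonneg_left htb (mul_nonneg hxu hxv)
      have key2 : xu * (1 - qv) ≤ xu * (1 - qu) :=
        mul_le_mul_of_nonneg_left (by linarith) hxu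
      have key3 : (1 - qv) * (xu * xv) ≤ (1 - qv) * ((xu + xv) / 4) := by
        apply mul_le_mul_of_nonneg_left _ (by linarith)
        nlinarith [sq_nonneg (xu - xv), mul_nonneg (add_nonneg hxu hxv) (sub_nonneg.2 hsum)]
      nlinarith
    · have key1 : xu * xv * t ≤ xu * xv * (1 - qu) :=
        mul_le_mul_of_nonneg_left hta (mul_nonneg hxu hxv)
      have key2 : xv * (1 - qu) ≤ xv * (1 - qv) :=
        mul_le_mul_of_nonneg_left (by linarith) hxv
      have key3 : (1 - qu) * (xu * xv) ≤ (1 - qu) * ((xu + xv) / 4) := by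
        apply mul_le_mul_of_nonneg_left _ (by linarith)
        nlinarith [sq_nonneg (xu - xv), mul_nonneg (add_nonneg hxu hxv) (sub_nonneg.2 hsum)]
      nlinarith
end

section
/- Let x_u, x_v, q_u, q_v, q_{uv} be real numbers with 0 ≤ x_u ≤ 1, 0 ≤ x_v ≤ 1, x_u + x_v ≥ 1, 0 ≤ q_u ≤ 1, 0 ≤ q_v ≤ 1, and q_u + q_v − 1 ≤ q_{uv} ≤ min(q_u, q_v). Then x_u(1 − q_u) + x_v(1 − q_v) − x_u·x_v·(1 − q_u − q_v + q_{uv}) ≥ (3/4)·[x_u(1 − q_u) + x_v(1 − q_v) − (x_u + x_v − 1)·(1 − q_u − q_v + q_{uv})]. -/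
/-- Per-edge estimate in Case 2 (`x_u + x_v ≥ 1`) of the proof that `F ≥ (3/4)·L`. -/
theorem case2_estimate (xu xv qu qv quv : ℝ)
    (hxu0 : 0 ≤ xu) (hxu1 : xu ≤ 1) (hxv0 : 0 ≤ xv) (hxv1 : xv ≤ 1)
    (hsum : 1 ≤ xu + xv)
    (hqu0 : 0 ≤ qu) (hqu1 : qu ≤ 1) (hqv0 : 0 ≤ qv) (hqv1 : qv ≤ 1)
    (hlow : qu + qv - 1 ≤ quv) (hup : quv ≤ min qu qv) :
    (3 / 4) * (xu * (1 - qu) + xv * (1 - qv) - (xu + xv - 1) * (1 - qu - qv + quv))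
      ≤ xu * (1 - qu) + xv * (1 - qv) - xu * xv * (1 - qu - qv + quv) := by
  have h1 : quv ≤ qu := le_trans hup (min_le_left _ _)
  have h2 : quv ≤ qv := le_trans hup (min_le_right _ _)
  have hp : 0 ≤ 1 - qu - qv + quv := by linarith
  nlinarith [mul_nonneg hxu0 hp, mul_nonneg hxv0 hp,
    mul_nonneg hp (sq_nonneg (xu + xv - 1)), mul_nonneg hp (sq_nonneg (xu - xv)),
    mul_nonneg (mul_nonneg (sub_nonneg.2 hxu1) (sub_nonneg.2 hxv1)) hp,
    mul_nonneg hxu0 (sub_nonneg.2 h2), mul_nonneg hxv0 (sub_nonneg.2 h1)]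
end

section
/- Let M be a matroid on a finite ground set V and let P_M ⊆ ℝ^V be the convex hull of the indicator vectors of the independent sets of M. Let G = (V, E) be a simple graph with nonnegative edge weights w_e ≥ 0 and π a distribution over subsets of V. Then for every x ∈ P_M there exists an independent set I of M with F^π(1_I) ≥ F^π(x), where 1_I is the indicator vector of I. -/
open Finset

/-- The indicator vector of a finite vertex set. -/
def indVec {V : Type*} [DecidableEq V] (I : Finset V) : V → ℝ :=
  fun v => if v ∈ I then 1 else 0

/-- The matroid polytope: the convex hull of the indicator vectors of the independent sets. -/
def matroidPolytope {V : Type*} [Fintype V] [DecidableEq V] (M : Matroid V) : Set (V → ℝ) :=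
  convexHull ℝ {y : V → ℝ | ∃ I : Finset V, M.Indep ↑I ∧ y = indVec I}

namespace PipageAux

variable {V : Type*} [Fintype V] [DecidableEq V]

lemma marg_nonneg (π : Finset V → ℝ) (hpos : ∀ S, 0 ≤ π S) (u : V) : 0 ≤ marg π u :=
  Finset.sum_nonneg fun S _ => hpos S

lemma marg_le_one (π : Finset V → ℝ) (hpos : ∀ S, 0 ≤ π S)
    (hsum : ∑ S : Finset V, π S = 1) (u : V) : marg π u ≤ 1 := by
  rw [← hsum]
  exact Finset.sum_le_sum_of_subset_of_nonneg (Finset.filter_subset _ _)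
    (fun S _ _ => hpos S)

lemma marg2_le_marg_left (π : Finset V → ℝ) (hpos : ∀ S, 0 ≤ π S) (u v : V) :
    marg2 π u v ≤ marg π u := by
  apply Finset.sum_le_sum_of_subset_of_nonneg
  · intro S hS
    simp only [Finset.mem_filter] at hS ⊢
    exact ⟨hS.1, hS.2.1⟩
  · exact fun S _ _ => hpos S

lemma marg2_le_marg_right (π : Finset V → ℝ) (hpos : ∀ S, 0 ≤ π S) (u v : V) :
    marg2 π u v ≤ marg π v := by
  apply Finset.sum_le_sum_of_subset_of_nonneg
  · intro S hS
    simp only [Finset.mem_filter] at hS ⊢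
    exact ⟨hS.1, hS.2.2⟩
  · exact fun S _ _ => hpos S

lemma marg_union_le_one (π : Finset V → ℝ) (hpos : ∀ S, 0 ≤ π S)
    (hsum : ∑ S : Finset V, π S = 1) (u v : V) :
    marg π u + marg π v - marg2 π u v ≤ 1 := by
  have key : marg π u + marg π v =
      (∑ S ∈ univ.filter (fun S : Finset V => u ∈ S ∨ v ∈ S), π S) + marg2 π u v := by
    rw [marg, marg, marg2, Finset.filter_or, Finset.filter_and]
    exact (Finset.sum_union_inter).symm
  have hle : (∑ S ∈ univ.filter (fun S : Finset V => u ∈ S ∨ v ∈ S), π S) ≤ 1 := by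
    rw [← hsum]
    exact Finset.sum_le_sum_of_subset_of_nonneg (Finset.filter_subset _ _)
      (fun S _ _ => hpos S)
  linarith


section MatroidSwap

variable (M : Matroid V) (hM : M.E = Set.univ)

include hM

lemma ground_triv (X : Set V) : X ⊆ M.E := by rw [hM]; exact Set.subset_univ _

lemma insert_indep_of_not_mem_closure {I : Finset V} (hI : M.Indep ↑I) {f : V}
    (hfI : f ∉ I) (hf : f ∉ M.closure ↑I) : M.Indep ↑(insert f I) := by
  rw [Finset.coe_insert]
  rw [hI.insert_indep_iff_of_notMem (by simpa using hfI)]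
  exact ⟨by rw [hM]; trivial, hf⟩

lemma exchange_aux {I J : Finset V} (hI : M.Indep ↑I) (hJ : M.Indep ↑J) {i : V}
    (hiI : i ∈ I) (hiJ : i ∉ J) (hicl : i ∈ M.closure ↑J) :
    ∃ j ∈ J, j ∉ I ∧ M.Indep ↑(insert j (I.erase i)) ∧ M.Indep ↑(insert i (J.erase j)) := by
  classical
  obtain ⟨C0, hC0mem, hC0min⟩ : ∃ m ∈ (J.powerset.filter fun C : Finset V => i ∈ M.closure (↑C : Set V)),
      ∀ x ∈ (J.powerset.filter fun C : Finset V => i ∈ M.closure (↑C : Set V)), ¬ x < m := by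
    obtain ⟨m, hm⟩ :=
      Finset.exists_minimal (s := J.powerset.filter fun C : Finset V => i ∈ M.closure (↑C : Set V))
        ⟨J, by simp [hicl]⟩
    exact ⟨m, hm.1, fun x hx hlt => lt_irrefl _ (lt_of_lt_of_le hlt (hm.2 hx hlt.le))⟩
  rw [Finset.mem_filter, Finset.mem_powerset] at hC0mem
  obtain ⟨hC0sub, hC0cl⟩ := hC0mem
  have hErase : (↑(I.erase i) : Set V) = ↑I \ {i} := by simp
  -- find f ∈ C0 not spanned by I - i
  have hex : ∃ f ∈ C0, f ∉ M.closure ↑(I.erase i) := by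
    by_contra hcon
    push_neg at hcon
    have hsub : (↑C0 : Set V) ⊆ M.closure ↑(I.erase i) := by
      intro y hy
      exact hcon y (by simpa using hy)
    have h2 : M.closure ↑C0 ⊆ M.closure ↑(I.erase i) :=
      Matroid.closure_subset_closure_of_subset_closure hsub
    have h3 : i ∈ M.closure (↑I \ {i}) := by
      rw [← hErase]; exact h2 hC0cl
    exact hI.notMem_closure_diff_of_mem (by simpa using hiI) h3
  obtain ⟨f, hfC0, hfcl⟩ := hex
  have hfJ : f ∈ J := hC0sub hfC0
  have hfi : f ≠ i := by rintro rfl; exact hiJ hfJ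
  have hfI : f ∉ I := by
    intro hfI'
    apply hfcl
    apply M.subset_closure ↑(I.erase i) (ground_triv M hM _)
    simpa using ⟨hfI', hfi⟩
  have hIe : M.Indep ↑(I.erase i) := hI.subset (by simp [hErase, Set.diff_subset])
  have h1 : M.Indep ↑(insert f (I.erase i)) :=
    insert_indep_of_not_mem_closure M hM hIe (by simp [hfi, hfI]) hfcl
  -- i not spanned by J - f
  have h2cl : i ∉ M.closure ↑(J.erase f) := by
    intro hcon
    have hmin : i ∉ M.closure ↑(C0.erase f) := by
      intro hcon2
      refine hC0min (C0.erase f) ?_ ?_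
      · rw [Finset.mem_filter, Finset.mem_powerset]
        exact ⟨(Finset.erase_subset _ _).trans hC0sub, hcon2⟩
      · exact Finset.erase_ssubset hfC0
    have hins : i ∈ M.closure (insert f ↑(C0.erase f)) := by
      have hEq : insert f (↑(C0.erase f) : Set V) = ↑C0 := by
        rw [← Finset.coe_insert, Finset.insert_erase hfC0]
      rw [hEq]; exact hC0cl
    have hfx := Matroid.closure_exchange ⟨hins, hmin⟩
    have hsub2 : M.closure (insert i ↑(C0.erase f)) ⊆ M.closure ↑(J.erase f) := by
      apply Matroid.closure_subset_closure_of_subset_closure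
      intro y hy
      rcases Set.mem_insert_iff.mp hy with rfl | hy'
      · exact hcon
      · apply M.subset_closure ↑(J.erase f) (ground_triv M hM _)
        have hy'' : y ∈ C0.erase f := by simpa [and_comm] using hy'
        simp only [Finset.coe_erase, Set.mem_diff, Set.mem_singleton_iff]
        refine ⟨?_, Finset.ne_of_mem_erase hy''⟩
        simpa using hC0sub (Finset.mem_of_mem_erase hy'')
    have : f ∈ M.closure (↑J \ {f}) := by
      have := hsub2 hfx.1
      simpa using this
    exact hJ.notMem_closure_diff_of_mem (by simpa using hfJ) this
  have hJe : M.Indep ↑(J.erase f) := hJ.subset (by simp [Set.diff_subset])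
  have h2 : M.Indep ↑(insert i (J.erase f)) :=
    insert_indep_of_not_mem_closure M hM hJe (by simp [hiJ]) h2cl
  exact ⟨f, hfJ, hfI, h1, h2⟩

/-- Symmetric exchange for independent sets. -/
lemma swap_exists {I J : Finset V} (hI : M.Indep ↑I) (hJ : M.Indep ↑J)
    (h1 : (I \ J).Nonempty) (h2 : (J \ I).Nonempty) :
    ∃ i ∈ I, i ∉ J ∧ ∃ j ∈ J, j ∉ I ∧
      M.Indep ↑(insert j (I.erase i)) ∧ M.Indep ↑(insert i (J.erase j)) := by
  by_cases hA : ∃ i ∈ I \ J, i ∈ M.closure ↑J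
  · obtain ⟨i, hi, hicl⟩ := hA
    rw [Finset.mem_sdiff] at hi
    obtain ⟨j, hjJ, hjI, hind1, hind2⟩ := exchange_aux M hM hI hJ hi.1 hi.2 hicl
    exact ⟨i, hi.1, hi.2, j, hjJ, hjI, hind1, hind2⟩
  by_cases hB : ∃ j ∈ J \ I, j ∈ M.closure ↑I
  · obtain ⟨j, hj, hjcl⟩ := hB
    rw [Finset.mem_sdiff] at hj
    obtain ⟨i, hiI, hiJ, hind1, hind2⟩ := exchange_aux M hM hJ hI hj.1 hj.2 hjcl
    exact ⟨i, hiI, hiJ, j, hj.1, hj.2, hind2, hind1⟩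
  · push_neg at hA hB
    obtain ⟨i, hi⟩ := h1
    obtain ⟨j, hj⟩ := h2
    rw [Finset.mem_sdiff] at hi hj
    have hij : i ≠ j := by rintro rfl; exact hi.2 hj.1
    have hicl := hA i (Finset.mem_sdiff.mpr hi)
    have hjcl := hB j (Finset.mem_sdiff.mpr hj)
    have hIe : M.Indep ↑(I.erase i) := hI.subset (by simp [Set.diff_subset])
    have hJe : M.Indep ↑(J.erase j) := hJ.subset (by simp [Set.diff_subset])
    have hjclI : j ∉ M.closure ↑(I.erase i) := fun hc =>
      hjcl (M.closure_subset_closure (by simp [Set.diff_subset]) hc)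
    have hiclJ : i ∉ M.closure ↑(J.erase j) := fun hc =>
      hicl (M.closure_subset_closure (by simp [Set.diff_subset]) hc)
    exact ⟨i, hi.1, hi.2, j, hj.1, hj.2,
      insert_indep_of_not_mem_closure M hM hIe (by simp [hij, hj.2]) hjclI,
      insert_indep_of_not_mem_closure M hM hJe (by simp [Ne.symm hij, hi.2]) hiclJ⟩

end MatroidSwap

variable (E : Finset (V × V)) (w : V × V → ℝ) (π : Finset V → ℝ)

/-- Quadratic expansion of `Ffun` along a direction `d`. -/
lemma Ffun_expand (x d : V → ℝ) (t : ℝ) :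
    Ffun E w π (fun v => x v + t * d v)
      = t ^ 2 * (∑ e ∈ E, d e.1 * d e.2 *
          (w e * (1 - marg2 π e.1 e.2) - w e * (1 - marg π e.1) - w e * (1 - marg π e.2)))
        + t * (∑ e ∈ E,
            (d e.1 * (w e * (1 - marg π e.1)
              + x e.2 * (w e * (1 - marg2 π e.1 e.2) - w e * (1 - marg π e.1)
                  - w e * (1 - marg π e.2)))
            + d e.2 * (w e * (1 - marg π e.2)
              + x e.1 * (w e * (1 - marg2 π e.1 e.2) - w e * (1 - marg π e.1)
                  - w e * (1 - marg π e.2)))))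
        + Ffun E w π x := by
  simp only [Ffun, Finset.mul_sum, ← Finset.sum_add_distrib]
  exact Finset.sum_congr rfl fun e _ => by ring

variable (hw : ∀ e ∈ E, 0 ≤ w e) (hloop : ∀ e ∈ E, e.1 ≠ e.2)
  (hpos : ∀ S : Finset V, 0 ≤ π S) (hsum : ∑ S : Finset V, π S = 1)

include hw hpos hsum

section coeffs

/-- The quadratic coefficient of each edge is nonpositive. -/
lemma C_nonpos {e : V × V} (he : e ∈ E) :
    w e * (1 - marg2 π e.1 e.2) - w e * (1 - marg π e.1) - w e * (1 - marg π e.2) ≤ 0 := by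
  have h1 := marg_union_le_one π hpos hsum e.1 e.2
  have h2 := mul_nonneg (hw e he)
    (by linarith : (0:ℝ) ≤ 1 - (marg π e.1 + marg π e.2 - marg2 π e.1 e.2))
  nlinarith

lemma A_nonneg {e : V × V} (he : e ∈ E) : 0 ≤ w e * (1 - marg π e.1) :=
  mul_nonneg (hw e he) (by linarith [marg_le_one π hpos hsum e.1])

lemma B_nonneg {e : V × V} (he : e ∈ E) : 0 ≤ w e * (1 - marg π e.2) :=
  mul_nonneg (hw e he) (by linarith [marg_le_one π hpos hsum e.2])

lemma AC_nonneg {e : V × V} (he : e ∈ E) :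
    0 ≤ w e * (1 - marg π e.1)
      + (w e * (1 - marg2 π e.1 e.2) - w e * (1 - marg π e.1) - w e * (1 - marg π e.2)) := by
  have h1 := marg2_le_marg_right π hpos e.1 e.2
  have h2 := mul_nonneg (hw e he) (by linarith : (0:ℝ) ≤ marg π e.2 - marg2 π e.1 e.2)
  nlinarith

lemma BC_nonneg {e : V × V} (he : e ∈ E) :
    0 ≤ w e * (1 - marg π e.2)
      + (w e * (1 - marg2 π e.1 e.2) - w e * (1 - marg π e.1) - w e * (1 - marg π e.2)) := by
  have h1 := marg2_le_marg_left π hpos e.1 e.2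
  have h2 := mul_nonneg (hw e he) (by linarith : (0:ℝ) ≤ marg π e.1 - marg2 π e.1 e.2)
  nlinarith

end coeffs

include hloop in
/-- Monotone single-coordinate step. -/
lemma step_mono (x : V → ℝ) (hx0 : ∀ v, 0 ≤ x v) (hx1 : ∀ v, x v ≤ 1)
    (j : V) (t : ℝ) (ht : 0 ≤ t) :
    Ffun E w π x ≤ Ffun E w π (fun v => x v + t * (if v = j then 1 else 0)) := by
  rw [Ffun_expand E w π x (fun v => if v = j then 1 else 0) t]
  have hQ : (∑ e ∈ E, (if e.1 = j then (1:ℝ) else 0) * (if e.2 = j then 1 else 0) *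
      (w e * (1 - marg2 π e.1 e.2) - w e * (1 - marg π e.1) - w e * (1 - marg π e.2))) = 0 := by
    apply Finset.sum_eq_zero
    intro e he
    by_cases h1 : e.1 = j
    · by_cases h2 : e.2 = j
      · exact absurd (h1.trans h2.symm) (hloop e he)
      · simp [h2]
    · simp [h1]
  have hS : 0 ≤ ∑ e ∈ E,
      ((if e.1 = j then (1:ℝ) else 0) * (w e * (1 - marg π e.1)
        + x e.2 * (w e * (1 - marg2 π e.1 e.2) - w e * (1 - marg π e.1) - w e * (1 - marg π e.2)))
      + (if e.2 = j then (1:ℝ) else 0) * (w e * (1 - marg π e.2)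
        + x e.1 * (w e * (1 - marg2 π e.1 e.2) - w e * (1 - marg π e.1)
            - w e * (1 - marg π e.2)))) := by
    apply Finset.sum_nonneg
    intro e he
    have hA := A_nonneg E w π hw hpos hsum he
    have hB := B_nonneg E w π hw hpos hsum he
    have hC := C_nonpos E w π hw hpos hsum he
    have hAC := AC_nonneg E w π hw hpos hsum he
    have hBC := BC_nonneg E w π hw hpos hsum he
    have t1 : 0 ≤ w e * (1 - marg π e.1)
        + x e.2 * (w e * (1 - marg2 π e.1 e.2) - w e * (1 - marg π e.1)
            - w e * (1 - marg π e.2)) := by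
      nlinarith [hx0 e.2, hx1 e.2]
    have t2 : 0 ≤ w e * (1 - marg π e.2)
        + x e.1 * (w e * (1 - marg2 π e.1 e.2) - w e * (1 - marg π e.1)
            - w e * (1 - marg π e.2)) := by
      nlinarith [hx0 e.1, hx1 e.1]
    have p1 : (0:ℝ) ≤ (if e.1 = j then (1:ℝ) else 0) := by positivity
    have p2 : (0:ℝ) ≤ (if e.2 = j then (1:ℝ) else 0) := by positivity
    have := mul_nonneg p1 t1
    have := mul_nonneg p2 t2
    linarith
  rw [hQ]
  nlinarith [mul_nonneg ht hS]


def indVec' {V : Type*} [DecidableEq V] (I : Finset V) : V → ℝ :=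
  fun v => if v ∈ I then 1 else 0

include hloop in
/-- Filling a set of coordinates up to 1 does not decrease `Ffun`. -/
lemma step_fill (S : Finset V) (x : V → ℝ) (hx0 : ∀ v, 0 ≤ x v) (hx1 : ∀ v, x v ≤ 1) :
    Ffun E w π x ≤ Ffun E w π (fun v => if v ∈ S then 1 else x v) := by
  induction S using Finset.induction_on with
  | empty => simp
  | @insert foo S ha ih =>
    apply le_trans ih
    set x' : V → ℝ := fun v => if v ∈ S then 1 else x v with hx'
    have hx'0 : ∀ v, 0 ≤ x' v := by
      intro v; simp only [hx']; split
      · norm_num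
      · exact hx0 v
    have hx'1 : ∀ v, x' v ≤ 1 := by
      intro v; simp only [hx']; split
      · norm_num
      · exact hx1 v
    have key := step_mono E w π hw hloop hpos hsum x' hx'0 hx'1 foo (1 - x' foo)
      (by linarith [hx'1 foo])
    have heq : (fun v => x' v + (1 - x' foo) * (if v = foo then 1 else 0))
        = (fun v => if v ∈ insert foo S then 1 else x v) := by
      funext v
      by_cases hv : v = foo
      · subst hv
        simp only [if_pos rfl, Finset.mem_insert_self, if_pos]
        ring
      · simp only [if_neg hv, mul_zero, add_zero, Finset.mem_insert]
        have : (v ∈ S ∨ v = foo) ↔ v ∈ S := by tauto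
        simp only [hx']
        by_cases hvS : v ∈ S <;> simp [hvS, hv]
    rw [← heq]
    exact key

include hloop in
/-- Convexity step along `e_i - e_j`. -/
lemma step_quad (x : V → ℝ) (i j : V) (hij : i ≠ j) (l m : ℝ) (hl : 0 ≤ l) (hm : 0 ≤ m) :
    Ffun E w π x ≤ Ffun E w π
        (fun v => x v + (-l) * ((if v = i then 1 else 0) - (if v = j then 1 else 0)))
      ∨ Ffun E w π x ≤ Ffun E w π
        (fun v => x v + m * ((if v = i then 1 else 0) - (if v = j then 1 else 0))) := by
  set d : V → ℝ := fun v => (if v = i then 1 else 0) - (if v = j then 1 else 0) with hd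
  rw [Ffun_expand E w π x d (-l), Ffun_expand E w π x d m]
  set Q := ∑ e ∈ E, d e.1 * d e.2 *
      (w e * (1 - marg2 π e.1 e.2) - w e * (1 - marg π e.1) - w e * (1 - marg π e.2)) with hQdef
  set s := ∑ e ∈ E,
      (d e.1 * (w e * (1 - marg π e.1)
        + x e.2 * (w e * (1 - marg2 π e.1 e.2) - w e * (1 - marg π e.1) - w e * (1 - marg π e.2)))
      + d e.2 * (w e * (1 - marg π e.2)
        + x e.1 * (w e * (1 - marg2 π e.1 e.2) - w e * (1 - marg π e.1)
            - w e * (1 - marg π e.2)))) with hsdef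
  have hQ : 0 ≤ Q := by
    rw [hQdef]
    apply Finset.sum_nonneg
    intro e he
    have hC := C_nonpos E w π hw hpos hsum he
    have hne := hloop e he
    have hprod : d e.1 * d e.2 = 0 ∨ d e.1 * d e.2 = -1 := by
      simp only [hd]
      by_cases h1 : e.1 = i <;> by_cases h2 : e.1 = j <;>
        by_cases h3 : e.2 = i <;> by_cases h4 : e.2 = j <;>
        first
          | (exact absurd (h1.trans h2.symm) hij)
          | (exact absurd (h3.trans h4.symm) hij)
          | (exact absurd (h1.trans h3.symm) hne)
          | (exact absurd (h2.trans h4.symm) hne)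
          | (norm_num [h1, h2, h3, h4, hij, Ne.symm hij])
    rcases hprod with h | h <;> rw [h] <;> nlinarith
  rcases le_total 0 s with h | h
  · right
    nlinarith [mul_nonneg hm h, mul_nonneg (mul_nonneg hm hm) hQ]
  · left
    nlinarith [mul_nonneg hl (neg_nonneg.mpr h), mul_nonneg (mul_nonneg hl hl) hQ]




section Merge

omit hw hpos hsum in
lemma sdiff_swap_left {I J : Finset V} {i j : V} (hiI : i ∈ I) (hiJ : i ∉ J)
    (hjJ : j ∈ J) (hjI : j ∉ I) :
    (insert j (I.erase i)) \ J = (I \ J).erase i := by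
  ext v
  simp only [Finset.mem_sdiff, Finset.mem_insert, Finset.mem_erase]
  constructor
  · rintro ⟨h1 | ⟨hne, hvI⟩, hvJ⟩
    · exact absurd (h1 ▸ hjJ) hvJ
    · exact ⟨hne, hvI, hvJ⟩
  · rintro ⟨hne, hvI, hvJ⟩
    exact ⟨Or.inr ⟨hne, hvI⟩, hvJ⟩

omit hw hpos hsum in
lemma sdiff_swap_right {I J : Finset V} {i j : V} (hiI : i ∈ I) (hiJ : i ∉ J)
    (hjJ : j ∈ J) (hjI : j ∉ I) :
    J \ (insert j (I.erase i)) = (J \ I).erase j := by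
  ext v
  simp only [Finset.mem_sdiff, Finset.mem_insert, Finset.mem_erase]
  constructor
  · rintro ⟨hvJ, hv⟩
    push_neg at hv
    obtain ⟨hvj, hv2⟩ := hv
    refine ⟨hvj, hvJ, ?_⟩
    intro hvI
    by_cases hvi : v = i
    · exact hiJ (hvi ▸ hvJ)
    · exact (hv2 hvi) hvI
  · rintro ⟨hne, hvJ, hvI⟩
    refine ⟨hvJ, ?_⟩
    push_neg
    exact ⟨hne, fun _ hvI' => hvI hvI'⟩

include hw hloop hpos hsum

lemma merge (M : Matroid V) (hM : M.E = Set.univ) :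
    ∀ (d : ℕ) (I J : Finset V), (I \ J).card + (J \ I).card ≤ d →
      M.Indep ↑I → M.Indep ↑J →
      ∀ (y : V → ℝ) (a b : ℝ), (∀ v, 0 ≤ y v) → 0 ≤ a → 0 ≤ b →
        (∀ v, y v + a + b ≤ 1) →
        ∃ K : Finset V, M.Indep ↑K ∧
          Ffun E w π (fun v => y v + a * indVec' I v + b * indVec' J v)
            ≤ Ffun E w π (fun v => y v + (a + b) * indVec' K v) := by
  intro d
  induction d with
  | zero =>
    intro I J hcard hI hJ y a b hy ha hb hyab
    have h1 : I = J := by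
      have e1 : I \ J = ∅ := Finset.card_eq_zero.mp (by omega)
      have e2 : J \ I = ∅ := Finset.card_eq_zero.mp (by omega)
      exact subset_antisymm (Finset.sdiff_eq_empty_iff_subset.mp e1)
        (Finset.sdiff_eq_empty_iff_subset.mp e2)
    subst h1
    exact ⟨I, hI, le_of_eq (by congr 1; funext v; ring)⟩
  | succ d ih =>
    intro I J hcard hI hJ y a b hy ha hb hyab
    by_cases hIJ : I = J
    · subst hIJ
      exact ⟨I, hI, le_of_eq (by congr 1; funext v; ring)⟩
    -- the current point and its bounds
    set x : V → ℝ := fun v => y v + a * indVec' I v + b * indVec' J v with hxdef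
    have hx0 : ∀ v, 0 ≤ x v := by
      intro v
      have h1 : (0:ℝ) ≤ indVec' I v := by simp only [indVec']; positivity
      have h2 : (0:ℝ) ≤ indVec' J v := by simp only [indVec']; positivity
      have := mul_nonneg ha h1
      have := mul_nonneg hb h2
      simp only [hxdef]
      linarith [hy v]
    have hx1 : ∀ v, x v ≤ 1 := by
      intro v
      have h1 : indVec' I v ≤ 1 := by simp only [indVec']; split <;> norm_num
      have h2 : indVec' J v ≤ 1 := by simp only [indVec']; split <;> norm_num
      have h1' : (0:ℝ) ≤ indVec' I v := by simp only [indVec']; positivity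
      have h2' : (0:ℝ) ≤ indVec' J v := by simp only [indVec']; positivity
      have q1 : a * indVec' I v ≤ a := by nlinarith
      have q2 : b * indVec' J v ≤ b := by nlinarith
      simp only [hxdef]
      linarith [hyab v]
    by_cases hIJ1 : I \ J = ∅
    · -- I ⊂ J : grow I by one element of J \ I
      have hsub : I ⊆ J := Finset.sdiff_eq_empty_iff_subset.mp hIJ1
      have hJI : (J \ I).Nonempty := by
        rw [Finset.sdiff_nonempty]
        intro hsub'
        exact hIJ (subset_antisymm hsub hsub')
      obtain ⟨j, hj⟩ := hJI
      rw [Finset.mem_sdiff] at hj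
      obtain ⟨hjJ, hjI⟩ := hj
      have hI' : M.Indep ↑(insert j I) := hJ.subset (by
        rw [Finset.coe_insert]
        exact Set.insert_subset (by simpa using hjJ) (by simpa using hsub))
      have hcard' : ((insert j I) \ J).card + (J \ (insert j I)).card ≤ d := by
        have e1 : (insert j I) \ J = ∅ :=
          Finset.sdiff_eq_empty_iff_subset.mpr (Finset.insert_subset hjJ hsub)
        have e2 : J \ (insert j I) = (J \ I).erase j := by
          ext v
          simp only [Finset.mem_sdiff, Finset.mem_insert, Finset.mem_erase]
          tauto
        have hmem : j ∈ J \ I := Finset.mem_sdiff.mpr ⟨hjJ, hjI⟩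
        have hpos' : 0 < (J \ I).card := Finset.card_pos.mpr ⟨j, hmem⟩
        rw [e1, e2, Finset.card_erase_of_mem hmem]
        simp only [Finset.card_empty]
        omega
      have hstep := step_mono E w π hw hloop hpos hsum x hx0 hx1 j a ha
      have heq : (fun v => x v + a * (if v = j then 1 else 0))
          = (fun v => y v + a * indVec' (insert j I) v + b * indVec' J v) := by
        funext v
        by_cases hv : v = j
        · subst hv
          simp only [hxdef, indVec', if_pos rfl, Finset.mem_insert_self, if_pos,
            if_neg hjI]
          ring
        · simp only [hxdef, indVec', if_neg hv, Finset.mem_insert, hv, false_or, if_false]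
          ring
      rw [heq] at hstep
      obtain ⟨K, hK, hineq⟩ := ih (insert j I) J hcard' hI' hJ y a b hy ha hb hyab
      exact ⟨K, hK, le_trans hstep hineq⟩
    by_cases hJI1 : J \ I = ∅
    · -- J ⊂ I : grow J by one element of I \ J
      have hsub : J ⊆ I := Finset.sdiff_eq_empty_iff_subset.mp hJI1
      have hIJn : (I \ J).Nonempty := Finset.nonempty_iff_ne_empty.mpr hIJ1
      obtain ⟨j, hj⟩ := hIJn
      rw [Finset.mem_sdiff] at hj
      obtain ⟨hjI, hjJ⟩ := hj
      have hJ' : M.Indep ↑(insert j J) := hI.subset (by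
        rw [Finset.coe_insert]
        exact Set.insert_subset (by simpa using hjI) (by simpa using hsub))
      have hcard' : (I \ (insert j J)).card + ((insert j J) \ I).card ≤ d := by
        have e1 : (insert j J) \ I = ∅ :=
          Finset.sdiff_eq_empty_iff_subset.mpr (Finset.insert_subset hjI hsub)
        have e2 : I \ (insert j J) = (I \ J).erase j := by
          ext v
          simp only [Finset.mem_sdiff, Finset.mem_insert, Finset.mem_erase]
          tauto
        have hmem : j ∈ I \ J := Finset.mem_sdiff.mpr ⟨hjI, hjJ⟩
        have hpos' : 0 < (I \ J).card := Finset.card_pos.mpr ⟨j, hmem⟩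
        rw [e1, e2, Finset.card_erase_of_mem hmem]
        simp only [Finset.card_empty]
        omega
      have hstep := step_mono E w π hw hloop hpos hsum x hx0 hx1 j b hb
      have heq : (fun v => x v + b * (if v = j then 1 else 0))
          = (fun v => y v + a * indVec' I v + b * indVec' (insert j J) v) := by
        funext v
        by_cases hv : v = j
        · subst hv
          simp only [hxdef, indVec', if_pos rfl, Finset.mem_insert_self, if_pos,
            if_neg hjJ]
          ring
        · simp only [hxdef, indVec', if_neg hv, Finset.mem_insert, hv, false_or, if_false]
          ring
      rw [heq] at hstep
      obtain ⟨K, hK, hineq⟩ := ih I (insert j J) hcard' hI hJ' y a b hy ha hb hyab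
      exact ⟨K, hK, le_trans hstep hineq⟩
    · -- both differences nonempty : swap
      have hIJn : (I \ J).Nonempty := Finset.nonempty_iff_ne_empty.mpr hIJ1
      have hJIn : (J \ I).Nonempty := Finset.nonempty_iff_ne_empty.mpr hJI1
      obtain ⟨i, hiI, hiJ, j, hjJ, hjI, hind1, hind2⟩ :=
        swap_exists M hM hI hJ hIJn hJIn
      have hij : i ≠ j := by rintro rfl; exact hiJ hjJ
      have hmi : i ∈ I \ J := Finset.mem_sdiff.mpr ⟨hiI, hiJ⟩
      have hmj : j ∈ J \ I := Finset.mem_sdiff.mpr ⟨hjJ, hjI⟩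
      have hpi : 0 < (I \ J).card := Finset.card_pos.mpr ⟨i, hmi⟩
      have hpj : 0 < (J \ I).card := Finset.card_pos.mpr ⟨j, hmj⟩
      rcases step_quad E w π hw hloop hpos hsum x i j hij a b ha hb with h | h
      · -- left endpoint : replace I by insert j (I.erase i)
        have heq : (fun v => x v + (-a) * ((if v = i then 1 else 0) - (if v = j then 1 else 0)))
            = (fun v => y v + a * indVec' (insert j (I.erase i)) v + b * indVec' J v) := by
          funext v
          simp only [hxdef, indVec', Finset.mem_insert, Finset.mem_erase]
          by_cases hvi : v = i
          · have hvI : v ∈ I := by rw [hvi]; exact hiI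
            have hvJ' : v ∉ J := by rw [hvi]; exact hiJ
            have hvj : v ≠ j := by rw [hvi]; exact hij
            rw [if_pos hvI, if_neg hvJ', if_pos hvi, if_neg hvj,
              if_neg (by rintro (h | hcon); exacts [hvj h, hcon.1 hvi]
                : ¬(v = j ∨ (¬v = i ∧ v ∈ I)))]
            ring
          · by_cases hvj : v = j
            · have hvI : v ∉ I := by rw [hvj]; exact hjI
              have hvJ' : v ∈ J := by rw [hvj]; exact hjJ
              rw [if_neg hvI, if_pos hvJ', if_neg hvi, if_pos hvj,
                if_pos (Or.inl hvj : v = j ∨ (¬v = i ∧ v ∈ I))]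
              ring
            · have hiff : (v = j ∨ (¬v = i ∧ v ∈ I)) ↔ v ∈ I := by
                constructor
                · rintro (rfl | ⟨_, hvI⟩)
                  · exact absurd rfl hvj
                  · exact hvI
                · intro hvI
                  exact Or.inr ⟨hvi, hvI⟩
              rw [if_neg hvi, if_neg hvj]
              simp only [hiff]
              ring
        rw [heq] at h
        have hcard' : ((insert j (I.erase i)) \ J).card
            + (J \ (insert j (I.erase i))).card ≤ d := by
          rw [sdiff_swap_left hiI hiJ hjJ hjI, sdiff_swap_right hiI hiJ hjJ hjI,
            Finset.card_erase_of_mem hmi, Finset.card_erase_of_mem hmj]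
          omega
        obtain ⟨K, hK, hineq⟩ :=
          ih (insert j (I.erase i)) J hcard' hind1 hJ y a b hy ha hb hyab
        exact ⟨K, hK, le_trans h hineq⟩
      · -- right endpoint : replace J by insert i (J.erase j)
        have heq : (fun v => x v + b * ((if v = i then 1 else 0) - (if v = j then 1 else 0)))
            = (fun v => y v + a * indVec' I v + b * indVec' (insert i (J.erase j)) v) := by
          funext v
          simp only [hxdef, indVec', Finset.mem_insert, Finset.mem_erase]
          by_cases hvi : v = i
          · have hvI : v ∈ I := by rw [hvi]; exact hiI
            have hvJ' : v ∉ J := by rw [hvi]; exact hiJ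
            have hvj : v ≠ j := by rw [hvi]; exact hij
            rw [if_pos hvI, if_neg hvJ', if_pos hvi, if_neg hvj,
              if_pos (Or.inl hvi : v = i ∨ (¬v = j ∧ v ∈ J))]
            ring
          · by_cases hvj : v = j
            · have hvI : v ∉ I := by rw [hvj]; exact hjI
              have hvJ' : v ∈ J := by rw [hvj]; exact hjJ
              rw [if_neg hvI, if_pos hvJ', if_neg hvi, if_pos hvj,
                if_neg (by rintro (h | hcon); exacts [hvi h, hcon.1 hvj]
                  : ¬(v = i ∨ (¬v = j ∧ v ∈ J)))]
              ring
            · have hiff : (v = i ∨ (¬v = j ∧ v ∈ J)) ↔ v ∈ J := by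
                constructor
                · rintro (rfl | ⟨_, hvJ⟩)
                  · exact absurd rfl hvi
                  · exact hvJ
                · intro hvJ
                  exact Or.inr ⟨hvj, hvJ⟩
              rw [if_neg hvi, if_neg hvj]
              simp only [hiff]
              ring
        rw [heq] at h
        have hcard' : (I \ (insert i (J.erase j))).card
            + ((insert i (J.erase j)) \ I).card ≤ d := by
          rw [sdiff_swap_left hjJ hjI hiI hiJ, sdiff_swap_right hjJ hjI hiI hiJ,
            Finset.card_erase_of_mem hmi, Finset.card_erase_of_mem hmj]
          omega
        obtain ⟨K, hK, hineq⟩ :=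
          ih I (insert i (J.erase j)) hcard' hI hind2 y a b hy ha hb hyab
        exact ⟨K, hK, le_trans h hineq⟩

end Merge

section Main

include hloop

def ptL (L : List (ℝ × Finset V)) : V → ℝ :=
  fun v => (L.map (fun p => p.1 * indVec' p.2 v)).sum

omit hw hloop hpos hsum in
lemma indVec'_nonneg (I : Finset V) (v : V) : 0 ≤ indVec' I v := by
  simp only [indVec']; positivity

omit hw hloop hpos hsum in
lemma indVec'_le_one (I : Finset V) (v : V) : indVec' I v ≤ 1 := by
  simp only [indVec']; split <;> norm_num

omit hw hloop hpos hsum in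
lemma ptL_nonneg (L : List (ℝ × Finset V)) (h : ∀ p ∈ L, 0 ≤ p.1) (v : V) :
    0 ≤ ptL L v := by
  induction L with
  | nil => simp [ptL]
  | cons p L ihL =>
    simp only [ptL, List.map_cons, List.sum_cons]
    have h1 := mul_nonneg (h p (List.mem_cons_self)) (indVec'_nonneg p.2 v)
    have h2 := ihL (fun q hq => h q (List.mem_cons_of_mem _ hq))
    simp only [ptL] at h2
    linarith

omit hw hloop hpos hsum in
lemma ptL_le_sum (L : List (ℝ × Finset V)) (h : ∀ p ∈ L, 0 ≤ p.1) (v : V) :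
    ptL L v ≤ (L.map Prod.fst).sum := by
  induction L with
  | nil => simp [ptL]
  | cons p L ihL =>
    simp only [ptL, List.map_cons, List.sum_cons]
    have h1 : p.1 * indVec' p.2 v ≤ p.1 := by
      have := indVec'_le_one p.2 v
      have := indVec'_nonneg p.2 v
      nlinarith [h p (List.mem_cons_self)]
    have h2 := ihL (fun q hq => h q (List.mem_cons_of_mem _ hq))
    simp only [ptL] at h2
    linarith

lemma main_aux (M : Matroid V) (hM : M.E = Set.univ) :
    ∀ (n : ℕ) (L : List (ℝ × Finset V)), L.length ≤ n →
      (∀ p ∈ L, 0 ≤ p.1) → (∀ p ∈ L, M.Indep ↑p.2) → (L.map Prod.fst).sum ≤ 1 →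
      ∃ I : Finset V, M.Indep ↑I ∧ Ffun E w π (ptL L) ≤ Ffun E w π (indVec' I) := by
  intro n
  induction n with
  | zero =>
    intro L hlen _ _ _
    have : L = [] := List.eq_nil_of_length_eq_zero (Nat.le_zero.mp hlen)
    subst this
    refine ⟨∅, by simpa using M.empty_indep, le_of_eq ?_⟩
    have hpt : ptL ([] : List (ℝ × Finset V)) = indVec' (∅ : Finset V) := by
      funext v
      simp [ptL, indVec']
    rw [hpt]
  | succ n ihn =>
    intro L hlen h0 hind hsum1
    match L with
    | [] =>
      refine ⟨∅, by simpa using M.empty_indep, le_of_eq ?_⟩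
      have hpt : ptL ([] : List (ℝ × Finset V)) = indVec' (∅ : Finset V) := by
        funext v
        simp [ptL, indVec']
      rw [hpt]
    | [p] =>
      have hp1 : 0 ≤ p.1 := h0 p (List.mem_cons_self)
      have hple : p.1 ≤ 1 := by simpa using hsum1
      have hx0 : ∀ v, 0 ≤ ptL [p] v := ptL_nonneg [p] h0
      have hx1 : ∀ v, ptL [p] v ≤ 1 := by
        intro v
        calc ptL [p] v ≤ ([p].map Prod.fst).sum := ptL_le_sum [p] h0 v
        _ ≤ 1 := hsum1
      have hfill := step_fill E w π hw hloop hpos hsum p.2 (ptL [p]) hx0 hx1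
      have heq : (fun v => if v ∈ p.2 then 1 else ptL [p] v) = indVec' p.2 := by
        funext v
        by_cases hv : v ∈ p.2
        · simp [indVec', hv]
        · simp [indVec', hv, ptL]
      rw [heq] at hfill
      exact ⟨p.2, hind p (List.mem_cons_self), hfill⟩
    | p :: q :: rest =>
      have hp1 : 0 ≤ p.1 := h0 p (by simp)
      have hq1 : 0 ≤ q.1 := h0 q (by simp)
      have hrest0 : ∀ r ∈ rest, 0 ≤ r.1 := fun r hr => h0 r (by simp [hr])
      have hy : ∀ v, 0 ≤ ptL rest v := ptL_nonneg rest hrest0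
      have hsum' : p.1 + q.1 + (rest.map Prod.fst).sum ≤ 1 := by
        simpa [add_assoc] using hsum1
      have hyab : ∀ v, ptL rest v + p.1 + q.1 ≤ 1 := by
        intro v
        have := ptL_le_sum rest hrest0 v
        linarith
      obtain ⟨K, hK, hKle⟩ := merge E w π hw hloop hpos hsum M hM
        ((p.2 \ q.2).card + (q.2 \ p.2).card) p.2 q.2 le_rfl
        (hind p (by simp)) (hind q (by simp)) (ptL rest) p.1 q.1 hy hp1 hq1 hyab
      have heq1 : ptL (p :: q :: rest)
          = (fun v => ptL rest v + p.1 * indVec' p.2 v + q.1 * indVec' q.2 v) := by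
        funext v
        simp only [ptL, List.map_cons, List.sum_cons]
        ring
      have heq2 : ptL ((p.1 + q.1, K) :: rest)
          = (fun v => ptL rest v + (p.1 + q.1) * indVec' K v) := by
        funext v
        simp only [ptL, List.map_cons, List.sum_cons]
        ring
      obtain ⟨I, hI, hIle⟩ := ihn ((p.1 + q.1, K) :: rest)
        (by simpa using Nat.le_of_succ_le_succ hlen)
        (by
          rintro r hr
          rcases List.mem_cons.mp hr with rfl | hr'
          · exact add_nonneg hp1 hq1
          · exact hrest0 r hr')
        (by
          rintro r hr
          rcases List.mem_cons.mp hr with rfl | hr'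
          · exact hK
          · exact hind r (by simp [hr']))
        (by simpa [add_assoc] using hsum')
      refine ⟨I, hI, ?_⟩
      calc Ffun E w π (ptL (p :: q :: rest))
          ≤ Ffun E w π (fun v => ptL rest v + (p.1 + q.1) * indVec' K v) := by
            rw [heq1]; exact hKle
        _ = Ffun E w π (ptL ((p.1 + q.1, K) :: rest)) := by rw [heq2]
        _ ≤ Ffun E w π (indVec' I) := hIle

end Main

end PipageAux

/-- Pipage rounding: every fractional point `x` of the matroid polytope can be rounded
to (the indicator vector of) an independent set `I` without decreasing `F^π`. -/
theorem pipage_rounding {V : Type*} [Fintype V] [DecidableEq V]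
    (M : Matroid V) (hM : M.E = Set.univ)
    (E : Finset (V × V)) (w : V × V → ℝ) (hw : ∀ e ∈ E, 0 ≤ w e)
    (hloop : ∀ e ∈ E, e.1 ≠ e.2) (hori : ∀ e ∈ E, (e.2, e.1) ∉ E)
    (π : Finset V → ℝ) (hpos : ∀ S : Finset V, 0 ≤ π S)
    (hsum : ∑ S : Finset V, π S = 1)
    (x : V → ℝ) (hx : x ∈ matroidPolytope M) :
    ∃ I : Finset V, M.Indep ↑I ∧ Ffun E w π x ≤ Ffun E w π (indVec I) := by
  classical
  rw [matroidPolytope, _root_.convexHull_eq] at hx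
  obtain ⟨ι, t, ww, z, hw0, hw1, hzs, hcm⟩ := hx
  rw [Finset.centerMass_eq_of_sum_1 _ _ hw1] at hcm
  set g : ι → Finset V := fun i =>
    if h : ∃ I : Finset V, M.Indep ↑I ∧ z i = indVec I then h.choose else ∅ with hg
  have hgspec : ∀ i ∈ t, M.Indep ↑(g i) ∧ z i = indVec (g i) := by
    intro i hi
    have hz := hzs i hi
    simp only [Set.mem_setOf_eq] at hz
    simp only [hg, dif_pos hz]
    exact hz.choose_spec
  set L : List (ℝ × Finset V) := t.toList.map (fun i => (ww i, g i)) with hL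
  have h0 : ∀ p ∈ L, 0 ≤ p.1 := by
    intro p hp
    rw [hL, List.mem_map] at hp
    obtain ⟨i, hi, rfl⟩ := hp
    exact hw0 i (Finset.mem_toList.mp hi)
  have hind : ∀ p ∈ L, M.Indep ↑p.2 := by
    intro p hp
    rw [hL, List.mem_map] at hp
    obtain ⟨i, hi, rfl⟩ := hp
    exact (hgspec i (Finset.mem_toList.mp hi)).1
  have hsum1 : (L.map Prod.fst).sum ≤ 1 := by
    rw [hL, List.map_map]
    have : (Prod.fst ∘ fun i => (ww i, g i)) = ww := rfl
    rw [this, Finset.sum_map_toList t ww, hw1]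
  have hpt : PipageAux.ptL L = x := by
    funext v
    rw [PipageAux.ptL, hL, List.map_map]
    have hcomp : ((fun p : ℝ × Finset V => p.1 * PipageAux.indVec' p.2 v)
        ∘ fun i => (ww i, g i)) = fun i => ww i * PipageAux.indVec' (g i) v := rfl
    rw [hcomp, Finset.sum_map_toList t _]
    have : ∑ i ∈ t, ww i * PipageAux.indVec' (g i) v = ∑ i ∈ t, (ww i • z i) v := by
      apply Finset.sum_congr rfl
      intro i hi
      rw [(hgspec i hi).2]
      rfl
    rw [this, ← Finset.sum_apply, hcm]
  obtain ⟨I, hI, hle⟩ := PipageAux.main_aux E w π hw hloop hpos hsum M hM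
    L.length L le_rfl h0 hind hsum1
  refine ⟨I, hI, ?_⟩
  rw [← hpt]
  exact hle
end

section
/- Let M_f be a matroid on a finite ground set V and let P_f ⊆ ℝ^V be the convex hull of the indicator vectors of the independent sets of M_f. Let G = (V, E) be a simple graph with nonnegative edge weights w_e ≥ 0 and π a distribution over subsets of V. Then for every x ∈ P_f there exists an independent set Î of M_f with L^π(1_Î) = F^π(1_Î) ≥ (3/4)·L^π(x). Consequently, writing Z^{LP} = max_{x ∈ P_f} L^π(x) and Z^{ILP} = max over independent sets I of M_f of L^π(1_I), one has (3/4)·Z^{LP} ≤ Z^{ILP} ≤ Z^{LP}; i.e., the LP relaxation of the follower's problem has integrality gap at most 4/3. -/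
open Finset

section Lemmas
variable {V : Type*} [Fintype V] [DecidableEq V] (π : Finset V → ℝ)

/-- quadratic coefficient of edge e -/
def ccE (w : V × V → ℝ) (π : Finset V → ℝ) (e : V × V) : ℝ :=
  w e * (1 - marg2 π e.1 e.2) - w e * (1 - marg π e.1) - w e * (1 - marg π e.2)

lemma marg_nonneg (hpos : ∀ S : Finset V, 0 ≤ π S) (u : V) : 0 ≤ marg π u :=
  Finset.sum_nonneg fun S _ => hpos S

lemma marg_le_one (hpos : ∀ S : Finset V, 0 ≤ π S) (hsum : ∑ S : Finset V, π S = 1) (u : V) : marg π u ≤ 1 := by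
  rw [← hsum]
  exact Finset.sum_le_sum_of_subset_of_nonneg (filter_subset _ _) (fun S _ _ => hpos S)

lemma marg2_le_left (hpos : ∀ S : Finset V, 0 ≤ π S) (u v : V) : marg2 π u v ≤ marg π u := by
  apply Finset.sum_le_sum_of_subset_of_nonneg _ (fun S _ _ => hpos S)
  exact Finset.monotone_filter_right _ (fun S _ hS => hS.1)

lemma marg2_le_right (hpos : ∀ S : Finset V, 0 ≤ π S) (u v : V) : marg2 π u v ≤ marg π v := by
  apply Finset.sum_le_sum_of_subset_of_nonneg _ (fun S _ _ => hpos S)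
  exact Finset.monotone_filter_right _ (fun S _ hS => hS.2)

lemma marg_union_le (hpos : ∀ S : Finset V, 0 ≤ π S) (hsum : ∑ S : Finset V, π S = 1) (u v : V) : marg π u + marg π v - marg2 π u v ≤ 1 := by
  rw [← hsum, marg, marg, marg2, Finset.sum_filter, Finset.sum_filter, Finset.sum_filter]
  rw [← Finset.sum_add_distrib, ← Finset.sum_sub_distrib]
  apply Finset.sum_le_sum
  intro S _
  by_cases h1 : u ∈ S <;> by_cases h2 : v ∈ S <;> simp [h1, h2] <;> linarith [hpos S]

lemma ccE_nonpos (hpos : ∀ S : Finset V, 0 ≤ π S) (hsum : ∑ S : Finset V, π S = 1) (w : V × V → ℝ) (e : V × V) (hwe : 0 ≤ w e) : ccE w π e ≤ 0 := by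
  have h := marg_union_le π hpos hsum e.1 e.2
  have : ccE w π e = w e * ((marg π e.1 + marg π e.2 - marg2 π e.1 e.2) - 1) := by
    rw [ccE]; ring
  rw [this]
  exact mul_nonpos_of_nonneg_of_nonpos hwe (by linarith)

lemma Ffun_expand (E : Finset (V × V)) (w : V × V → ℝ) (x d : V → ℝ) (t : ℝ) :
    Ffun E w π (x + t • d) = Ffun E w π x
      + t * (∑ e ∈ E, (d e.1 * (w e * (1 - marg π e.1)) + d e.2 * (w e * (1 - marg π e.2))
          + (x e.1 * d e.2 + d e.1 * x e.2) * ccE w π e))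
      + t ^ 2 * (∑ e ∈ E, ccE w π e * (d e.1 * d e.2)) := by
  rw [Finset.mul_sum, Finset.mul_sum, Ffun, Ffun, ← Finset.sum_add_distrib,
    ← Finset.sum_add_distrib]
  refine Finset.sum_congr rfl fun e _ => ?_
  simp only [Pi.add_apply, Pi.smul_apply, smul_eq_mul, ccE]
  ring

lemma step_ineq (E : Finset (V × V)) (w : V × V → ℝ)
    (hcc : ∀ e ∈ E, ccE w π e ≤ 0) (hloop : ∀ e ∈ E, e.1 ≠ e.2)
    (x d : V → ℝ) (hd : ∀ a b : V, a ≠ b → d a * d b ≤ 0)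
    {β γ : ℝ} (hβ : 0 < β) (hγ : 0 < γ) :
    Ffun E w π x ≤ Ffun E w π (x + γ • d) ∨ Ffun E w π x ≤ Ffun E w π (x - β • d) := by
  have hQ : 0 ≤ ∑ e ∈ E, ccE w π e * (d e.1 * d e.2) :=
    Finset.sum_nonneg fun e he => by nlinarith [hcc e he, hd e.1 e.2 (hloop e he)]
  by_contra hcon
  push_neg at hcon
  obtain ⟨h1, h2⟩ := hcon
  rw [Ffun_expand] at h1
  have h2' : Ffun E w π (x + (-β) • d) < Ffun E w π x := by
    rwa [neg_smul, ← sub_eq_add_neg]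
  rw [Ffun_expand] at h2'
  set B := ∑ e ∈ E, (d e.1 * (w e * (1 - marg π e.1)) + d e.2 * (w e * (1 - marg π e.2))
      + (x e.1 * d e.2 + d e.1 * x e.2) * ccE w π e)
  set Q := ∑ e ∈ E, ccE w π e * (d e.1 * d e.2)
  nlinarith [mul_pos hβ hγ, mul_pos (mul_pos hβ hγ) (add_pos hβ hγ)]

end Lemmas

section IndVec
variable {V : Type*} [DecidableEq V]

lemma indVec_insert {J : Finset V} {v : V} (h : v ∉ J) :
    indVec (insert v J) = indVec J + indVec {v} := by
  funext u
  simp only [indVec, Pi.add_apply, Finset.mem_insert, Finset.mem_singleton]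
  by_cases h1 : u = v
  · subst h1; simp [h]
  · simp [h1]

lemma indVec_erase {I : Finset V} {v : V} (h : v ∈ I) :
    indVec (I.erase v) = indVec I - indVec {v} := by
  funext u
  simp only [indVec, Pi.sub_apply, Finset.mem_erase, Finset.mem_singleton]
  by_cases h1 : u = v
  · subst h1; simp [h]
  · simp [h1]

lemma dprop_single (v : V) : ∀ a b : V, a ≠ b → indVec {v} a * indVec {v} b ≤ 0 := by
  intro a b hab
  simp only [indVec, Finset.mem_singleton]
  by_cases h1 : a = v
  · subst h1
    have hb : ¬ b = a := fun h => hab h.symm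
    rw [if_neg hb, mul_zero]
  · rw [if_neg h1, zero_mul]

lemma dprop_pair {v y : V} (hvy : v ≠ y) :
    ∀ a b : V, a ≠ b →
      (indVec {v} - indVec {y}) a * (indVec {v} - indVec {y}) b ≤ 0 := by
  intro a b hab
  simp only [indVec, Pi.sub_apply, Finset.mem_singleton]
  by_cases h1 : a = v <;> by_cases h2 : a = y <;> by_cases h3 : b = v <;> by_cases h4 : b = y <;>
    simp_all <;> norm_num

end IndVec

section Exchange
variable {V : Type*} [Fintype V] [DecidableEq V]

lemma exchange_lemma (M : Matroid V) (hM : M.E = Set.univ) {I J : Finset V}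
    (hI : M.Indep ↑I) (hJ : M.Indep ↑J) {v : V} (hvI : v ∈ I) (hvJ : v ∉ J)
    (hcl : v ∈ M.closure ↑J) :
    ∃ y, y ∈ J ∧ y ∉ I ∧ M.Indep (↑(insert y (I.erase v)) : Set V) ∧
      M.Indep (↑(insert v (J.erase y)) : Set V) := by
  classical
  have hground : ∀ (S : Set V), S ⊆ M.E := fun S => by rw [hM]; exact Set.subset_univ S
  -- minimal S' ⊆ J with v ∈ closure S'
  obtain ⟨S', hS'mem, hS'min⟩ := Finset.exists_min_image
    ((J.powerset).filter (fun S : Finset V => v ∈ M.closure (↑S : Set V))) Finset.card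
    ⟨J, by simp [hcl]⟩
  rw [Finset.mem_filter, Finset.mem_powerset] at hS'mem
  obtain ⟨hS'J, hvS'⟩ := hS'mem
  have hS'Jset : (↑S' : Set V) ⊆ ↑J := Finset.coe_subset.mpr hS'J
  have hS'indep : M.Indep ↑S' := hJ.subset hS'Jset
  have hvnotS' : v ∉ S' := fun h => hvJ (hS'J h)
  -- every y ∈ S' gives J - y + v independent
  have claim2 : ∀ y ∈ S', M.Indep (insert v ((↑J : Set V) \ {y})) := by
    intro y hy
    have hyJ : y ∈ J := hS'J hy
    have hyv : y ≠ v := fun h => hvJ (h ▸ hyJ)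
    by_contra hdep
    have hJy : M.Indep ((↑J : Set V) \ {y}) := hJ.subset Set.diff_subset
    have hvnotJy : v ∉ (↑J : Set V) \ {y} := fun h => hvJ (Finset.mem_coe.mp h.1)
    have hvcl : v ∈ M.closure ((↑J : Set V) \ {y}) := by
      by_contra hno
      exact hdep ((hJy.notMem_closure_iff_of_notMem hvnotJy (by rw [hM]; trivial)).mp hno)
    -- minimality gives v ∉ closure (S' \ {y})
    have hminy : v ∉ M.closure (↑(S'.erase y) : Set V) := by
      intro hmem
      have hmem' : S'.erase y ∈ (J.powerset).filter (fun S : Finset V => v ∈ M.closure (↑S : Set V)) := by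
        rw [Finset.mem_filter, Finset.mem_powerset]
        exact ⟨(Finset.erase_subset _ _).trans hS'J, hmem⟩
      have := hS'min _ hmem'
      have hlt := Finset.card_erase_lt_of_mem hy
      omega
    have hS'y_indep : M.Indep (↑(S'.erase y) : Set V) :=
      hS'indep.subset (by rw [Finset.coe_erase]; exact Set.diff_subset)
    have hvnotS'y : v ∉ (↑(S'.erase y) : Set V) := fun h =>
      hvnotS' (Finset.mem_of_mem_erase (Finset.mem_coe.mp h))
    have hT : M.Indep (insert v (↑(S'.erase y) : Set V)) :=
      (hS'y_indep.notMem_closure_iff_of_notMem hvnotS'y (by rw [hM]; trivial)).mp hminy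
    -- y is in the closure of T := insert v (S' \ {y})
    have hyT : y ∈ M.closure (insert v (↑(S'.erase y) : Set V)) := by
      by_contra hnot
      have hynotT : y ∉ insert v (↑(S'.erase y) : Set V) := by
        intro h
        rcases Set.mem_insert_iff.mp h with h | h
        · exact hyv h
        · exact (Finset.notMem_erase y S') (Finset.mem_coe.mp h)
      have hins : M.Indep (insert y (insert v (↑(S'.erase y) : Set V))) :=
        (hT.notMem_closure_iff_of_notMem hynotT (by rw [hM]; trivial)).mp hnot
      have heq : insert y (insert v (↑(S'.erase y) : Set V)) = insert v (↑S' : Set V) := by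
        rw [Set.insert_comm, Finset.coe_erase, Set.insert_diff_singleton,
          Set.insert_eq_of_mem (Finset.mem_coe.mpr hy)]
      rw [heq] at hins
      exact (hS'indep.notMem_closure_iff_of_notMem (fun h => hvnotS' (Finset.mem_coe.mp h))
        (by rw [hM]; trivial)).mpr hins hvS'
    -- chain of closures
    have hsub : (insert v (↑(S'.erase y) : Set V)) ⊆ insert v ((↑J : Set V) \ {y}) := by
      apply Set.insert_subset_insert
      rw [Finset.coe_erase]
      exact Set.diff_subset_diff_left hS'Jset
    have h2 : M.closure (insert v ((↑J : Set V) \ {y})) ⊆ M.closure ((↑J : Set V) \ {y}) :=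
      Matroid.closure_subset_closure_of_subset_closure
        (Set.insert_subset hvcl (M.subset_closure _ (hground _)))
    have : y ∈ M.closure ((↑J : Set V) \ {y}) :=
      h2 (M.closure_subset_closure hsub hyT)
    exact hJ.notMem_closure_diff_of_mem (Finset.mem_coe.mpr hyJ) this
  -- find y ∈ S' outside closure (I \ {v})
  have hvIcl : v ∉ M.closure ((↑I : Set V) \ {v}) :=
    hI.notMem_closure_diff_of_mem (Finset.mem_coe.mpr hvI)
  have claim3 : ∃ y ∈ S', (y : V) ∉ M.closure ((↑I : Set V) \ {v}) := by
    by_contra h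
    push_neg at h
    have hsub : (↑S' : Set V) ⊆ M.closure ((↑I : Set V) \ {v}) := fun y hy =>
      h y (Finset.mem_coe.mp hy)
    exact hvIcl (Matroid.closure_subset_closure_of_subset_closure hsub hvS')
  obtain ⟨y, hyS', hyncl⟩ := claim3
  have hyJ : y ∈ J := hS'J hyS'
  have hynotI : y ∉ I := by
    intro hyI
    have hyv : y ≠ v := fun h => hvJ (h ▸ hyJ)
    exact hyncl (M.subset_closure _ (hground _) ⟨Finset.mem_coe.mpr hyI, hyv⟩)
  have hIv : M.Indep ((↑I : Set V) \ {v}) := hI.subset Set.diff_subset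
  have hind1 : M.Indep (insert y ((↑I : Set V) \ {v})) :=
    (hIv.notMem_closure_iff_of_notMem (fun h => hynotI (Finset.mem_coe.mp h.1))
      (by rw [hM]; trivial)).mp hyncl
  refine ⟨y, hyJ, hynotI, ?_, ?_⟩
  · rwa [Finset.coe_insert, Finset.coe_erase]
  · rw [Finset.coe_insert, Finset.coe_erase]
    exact claim2 y hyS'
end Exchange

section Merge
variable {V : Type*} [Fintype V] [DecidableEq V]

lemma merge_lemma (M : Matroid V) (hM : M.E = Set.univ)
    (E : Finset (V × V)) (w : V × V → ℝ) (π : Finset V → ℝ)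
    (hcc : ∀ e ∈ E, ccE w π e ≤ 0) (hloop : ∀ e ∈ E, e.1 ≠ e.2) :
    ∀ (n : ℕ) (I J : Finset V), (I \ J).card + (J \ I).card ≤ n →
      M.Indep ↑I → M.Indep ↑J → ∀ (r : V → ℝ) (β γ : ℝ), 0 < β → 0 < γ →
      ∃ K : Finset V, M.Indep ↑K ∧
        Ffun E w π (r + β • indVec I + γ • indVec J) ≤
          Ffun E w π (r + (β + γ) • indVec K) := by
  intro n
  induction n with
  | zero =>
    intro I J hcard hI hJ r β γ hβ hγ
    have hIJ : I = J := by
      have h1 : I \ J = ∅ := Finset.card_eq_zero.mp (by omega)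
      have h2 : J \ I = ∅ := Finset.card_eq_zero.mp (by omega)
      exact Finset.Subset.antisymm (Finset.sdiff_eq_empty_iff_subset.mp h1)
        (Finset.sdiff_eq_empty_iff_subset.mp h2)
    subst hIJ
    exact ⟨I, hI, le_of_eq (by rw [add_smul, add_assoc])⟩
  | succ n ih =>
    intro I J hcard hI hJ r β γ hβ hγ
    by_cases hIJ : I = J
    · subst hIJ
      exact ⟨I, hI, le_of_eq (by rw [add_smul, add_assoc])⟩
    -- helper to conclude via induction hypothesis
    have finish : ∀ (I' J' : Finset V), M.Indep ↑I' → M.Indep ↑J' →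
        (I' \ J').card + (J' \ I').card ≤ n →
        Ffun E w π (r + β • indVec I + γ • indVec J) ≤
          Ffun E w π (r + β • indVec I' + γ • indVec J') →
        ∃ K : Finset V, M.Indep ↑K ∧
          Ffun E w π (r + β • indVec I + γ • indVec J) ≤
            Ffun E w π (r + (β + γ) • indVec K) := by
      intro I' J' h1 h2 h3 h4
      obtain ⟨K, hK1, hK2⟩ := ih I' J' h3 h1 h2 r β γ hβ hγ
      exact ⟨K, hK1, h4.trans hK2⟩
    -- the core step, assuming v ∈ I \ J
    have core : ∀ (I J : Finset V), M.Indep ↑I → M.Indep ↑J →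
        (I \ J).card + (J \ I).card ≤ n + 1 → ∀ v, v ∈ I → v ∉ J →
        ∃ (IB JA : Finset V) (d : V → ℝ),
          M.Indep ↑IB ∧ M.Indep ↑JA ∧
          (I \ JA).card + (JA \ I).card ≤ n ∧
          (IB \ J).card + (J \ IB).card ≤ n ∧
          (∀ a b : V, a ≠ b → d a * d b ≤ 0) ∧
          indVec JA = indVec J + d ∧ indVec IB = indVec I - d := by
      intro I J hI hJ hcard v hvI hvJ
      have hvIJ : v ∈ I \ J := Finset.mem_sdiff.mpr ⟨hvI, hvJ⟩
      by_cases hins : M.Indep (insert v (↑J : Set V))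
      · refine ⟨I.erase v, insert v J, indVec {v}, ?_, ?_, ?_, ?_, dprop_single v,
          indVec_insert hvJ, indVec_erase hvI⟩
        · exact hI.subset (by rw [Finset.coe_erase]; exact Set.diff_subset)
        · rw [Finset.coe_insert]; exact hins
        · have e1 : I \ insert v J = (I \ J).erase v := by
            ext a; simp only [Finset.mem_sdiff, Finset.mem_insert, Finset.mem_erase]; tauto
          have e2 : insert v J \ I = J \ I := by
            ext a; simp only [Finset.mem_sdiff, Finset.mem_insert]
            constructor
            · rintro ⟨h1 | h1, h2⟩
              · exact absurd (h1 ▸ hvI) h2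
              · exact ⟨h1, h2⟩
            · tauto
          rw [e1, e2, Finset.card_erase_of_mem hvIJ]
          have : 1 ≤ (I \ J).card := Finset.card_pos.mpr ⟨v, hvIJ⟩
          omega
        · have e1 : I.erase v \ J = (I \ J).erase v := by
            ext a; simp only [Finset.mem_sdiff, Finset.mem_erase]; tauto
          have e2 : J \ I.erase v = J \ I := by
            ext a; simp only [Finset.mem_sdiff, Finset.mem_erase]
            constructor
            · rintro ⟨h1, h2⟩
              refine ⟨h1, fun h3 => h2 ⟨fun ha => hvJ (ha ▸ h1), h3⟩⟩
            · rintro ⟨h1, h2⟩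
              exact ⟨h1, fun h3 => h2 h3.2⟩
          rw [e1, e2, Finset.card_erase_of_mem hvIJ]
          have : 1 ≤ (I \ J).card := Finset.card_pos.mpr ⟨v, hvIJ⟩
          omega
      · have hclv : v ∈ M.closure ↑J := by
          by_contra h
          exact hins ((hJ.notMem_closure_iff_of_notMem
            (fun hc => hvJ (Finset.mem_coe.mp hc)) (by rw [hM]; trivial)).mp h)
        obtain ⟨y, hyJ, hyI, hind1, hind2⟩ := exchange_lemma M hM hI hJ hvI hvJ hclv
        have hyv : y ≠ v := fun h => hvJ (h ▸ hyJ)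
        have hyJI : y ∈ J \ I := Finset.mem_sdiff.mpr ⟨hyJ, hyI⟩
        refine ⟨insert y (I.erase v), insert v (J.erase y), indVec {v} - indVec {y},
          hind1, hind2, ?_, ?_, dprop_pair hyv.symm, ?_, ?_⟩
        · have e1 : I \ insert v (J.erase y) = (I \ J).erase v := by
            ext a
            simp only [Finset.mem_sdiff, Finset.mem_insert, Finset.mem_erase]
            by_cases h1 : a = v <;> by_cases h2 : a = y <;> simp_all
          have e2 : insert v (J.erase y) \ I = (J \ I).erase y := by
            ext a
            simp only [Finset.mem_sdiff, Finset.mem_insert, Finset.mem_erase]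
            by_cases h1 : a = v <;> by_cases h2 : a = y <;> simp_all
          rw [e1, e2, Finset.card_erase_of_mem hvIJ, Finset.card_erase_of_mem hyJI]
          have h1 : 1 ≤ (I \ J).card := Finset.card_pos.mpr ⟨v, hvIJ⟩
          have h2 : 1 ≤ (J \ I).card := Finset.card_pos.mpr ⟨y, hyJI⟩
          omega
        · have e1 : insert y (I.erase v) \ J = (I \ J).erase v := by
            ext a
            simp only [Finset.mem_sdiff, Finset.mem_insert, Finset.mem_erase]
            constructor
            · rintro ⟨h1 | ⟨h1, h2⟩, h3⟩
              · exact absurd (h1 ▸ hyJ) h3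
              · exact ⟨h1, h2, h3⟩
            · rintro ⟨h1, h2, h3⟩
              exact ⟨Or.inr ⟨h1, h2⟩, h3⟩
          have e2 : J \ insert y (I.erase v) = (J \ I).erase y := by
            ext a
            simp only [Finset.mem_sdiff, Finset.mem_insert, Finset.mem_erase]
            by_cases h1 : a = v <;> by_cases h2 : a = y <;> simp_all
          rw [e1, e2, Finset.card_erase_of_mem hvIJ, Finset.card_erase_of_mem hyJI]
          have h1 : 1 ≤ (I \ J).card := Finset.card_pos.mpr ⟨v, hvIJ⟩
          have h2 : 1 ≤ (J \ I).card := Finset.card_pos.mpr ⟨y, hyJI⟩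
          omega
        · rw [indVec_insert (fun h => hvJ (Finset.mem_erase.mp h).2 : v ∉ J.erase y),
            indVec_erase hyJ]
          abel
        · rw [indVec_insert (fun h => hyI (Finset.mem_of_mem_erase h) : y ∉ I.erase v),
            indVec_erase hvI]
          abel
    -- now apply the core step in the correct orientation
    obtain ⟨v, hv⟩ : ∃ v, v ∈ I \ J ∨ v ∈ J \ I := by
      by_contra h
      push_neg at h
      apply hIJ
      ext a
      constructor
      · intro ha
        by_contra hb
        exact (h a).1 (Finset.mem_sdiff.mpr ⟨ha, hb⟩)
      · intro ha
        by_contra hb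
        exact (h a).2 (Finset.mem_sdiff.mpr ⟨ha, hb⟩)
    rcases hv with hv | hv
    · obtain ⟨hvI, hvJ⟩ := Finset.mem_sdiff.mp hv
      obtain ⟨IB, JA, d, hIB, hJA, hcard1, hcard2, hd, hJAeq, hIBeq⟩ :=
        core I J hI hJ hcard v hvI hvJ
      have heqA : r + β • indVec I + γ • indVec JA
          = (r + β • indVec I + γ • indVec J) + γ • d := by
        rw [hJAeq, smul_add]; abel
      have heqB : r + β • indVec IB + γ • indVec J
          = (r + β • indVec I + γ • indVec J) - β • d := by
        rw [hIBeq, smul_sub]; abel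
      rcases step_ineq π E w hcc hloop (r + β • indVec I + γ • indVec J) d hd hβ hγ with h | h
      · exact finish I JA hI hJA hcard1 (by rw [heqA]; exact h)
      · exact finish IB J hIB hJ hcard2 (by rw [heqB]; exact h)
    · obtain ⟨hvJ, hvI⟩ := Finset.mem_sdiff.mp hv
      obtain ⟨JB, IA, d, hJB, hIA, hcard1, hcard2, hd, hIAeq, hJBeq⟩ :=
        core J I hJ hI (by omega) v hvJ hvI
      have heqA : r + β • indVec IA + γ • indVec J
          = (r + β • indVec I + γ • indVec J) + β • d := by
        rw [hIAeq, smul_add]; abel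
      have heqB : r + β • indVec I + γ • indVec JB
          = (r + β • indVec I + γ • indVec J) - γ • d := by
        rw [hJBeq, smul_sub]; abel
      rcases step_ineq π E w hcc hloop (r + β • indVec I + γ • indVec J) d hd hγ hβ with h | h
      · refine finish IA J hIA hJ (by omega) (by rw [heqA]; exact h)
      · refine finish I JB hI hJB (by omega) (by rw [heqB]; exact h)
end Merge

section Round
variable {V : Type*} [Fintype V] [DecidableEq V]

lemma combine_lemma (M : Matroid V) (hM : M.E = Set.univ)
    (E : Finset (V × V)) (w : V × V → ℝ) (π : Finset V → ℝ)
    (hcc : ∀ e ∈ E, ccE w π e ≤ 0) (hloop : ∀ e ∈ E, e.1 ≠ e.2)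
    {ι : Type*} (t : Finset ι) :
    ∀ (wt : ι → ℝ) (z : ι → Finset V), t.Nonempty → (∀ i ∈ t, 0 < wt i) →
      (∀ i ∈ t, M.Indep ↑(z i)) → ∀ r : V → ℝ,
      ∃ K : Finset V, M.Indep ↑K ∧
        Ffun E w π (r + ∑ i ∈ t, wt i • indVec (z i)) ≤
          Ffun E w π (r + (∑ i ∈ t, wt i) • indVec K) := by
  classical
  induction t using Finset.induction_on with
  | empty => intro _ _ h; exact absurd h (by simp)
  | @insert a s ha ih =>
    intro wt z _ hpos hind r
    rcases Finset.eq_empty_or_nonempty s with hs | hs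
    · subst hs
      refine ⟨z a, hind a (Finset.mem_insert_self a _), le_of_eq ?_⟩
      rw [Finset.sum_insert (by simp), Finset.sum_insert (by simp),
        Finset.sum_empty, Finset.sum_empty, add_zero, add_zero]
    · obtain ⟨K', hK'1, hK'2⟩ := ih wt z hs (fun i hi => hpos i (Finset.mem_insert_of_mem hi))
        (fun i hi => hind i (Finset.mem_insert_of_mem hi)) (r + wt a • indVec (z a))
      have hsumpos : 0 < ∑ i ∈ s, wt i :=
        Finset.sum_pos (fun i hi => hpos i (Finset.mem_insert_of_mem hi)) hs
      obtain ⟨K, hK1, hK2⟩ := merge_lemma M hM E w π hcc hloop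
        ((z a \ K').card + (K' \ z a).card) (z a) K' le_rfl
        (hind a (Finset.mem_insert_self a _)) hK'1 r (wt a) (∑ i ∈ s, wt i)
        (hpos a (Finset.mem_insert_self a _)) hsumpos
      refine ⟨K, hK1, ?_⟩
      rw [Finset.sum_insert ha, Finset.sum_insert ha]
      calc Ffun E w π (r + (wt a • indVec (z a) + ∑ i ∈ s, wt i • indVec (z i)))
          = Ffun E w π (r + wt a • indVec (z a) + ∑ i ∈ s, wt i • indVec (z i)) := by
            rw [add_assoc]
        _ ≤ Ffun E w π (r + wt a • indVec (z a) + (∑ i ∈ s, wt i) • indVec K') := hK'2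
        _ ≤ Ffun E w π (r + (wt a + ∑ i ∈ s, wt i) • indVec K) := hK2

lemma round_lemma (M : Matroid V) (hM : M.E = Set.univ)
    (E : Finset (V × V)) (w : V × V → ℝ) (π : Finset V → ℝ)
    (hcc : ∀ e ∈ E, ccE w π e ≤ 0) (hloop : ∀ e ∈ E, e.1 ≠ e.2)
    (x : V → ℝ) (hx : x ∈ matroidPolytope M) :
    ∃ K : Finset V, M.Indep ↑K ∧ Ffun E w π x ≤ Ffun E w π (indVec K) := by
  classical
  rw [matroidPolytope, _root_.convexHull_eq] at hx
  obtain ⟨ι, t, wt, z, hw0, hw1, hz, hx⟩ := hx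
  choose! Iz hindz heqz using hz
  rw [Finset.centerMass_eq_of_sum_1 _ _ hw1] at hx
  set t' : Finset ι := t.filter (fun i => wt i ≠ 0) with ht'
  have hsum' : ∑ i ∈ t', wt i = 1 := by rw [ht', Finset.sum_filter_ne_zero]; exact hw1
  have ht'ne : t'.Nonempty := by
    rcases Finset.eq_empty_or_nonempty t' with h | h
    · rw [h, Finset.sum_empty] at hsum'; norm_num at hsum'
    · exact h
  have hpos' : ∀ i ∈ t', 0 < wt i := fun i hi => by
    rw [ht', Finset.mem_filter] at hi
    exact lt_of_le_of_ne (hw0 i hi.1) (Ne.symm hi.2)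
  have hind' : ∀ i ∈ t', M.Indep ↑(Iz i) := fun i hi =>
    hindz i (Finset.mem_filter.mp hi).1
  have hx' : x = ∑ i ∈ t', wt i • indVec (Iz i) := by
    rw [← hx, ht']
    rw [Finset.sum_filter_of_ne (fun i hi hne => by
      intro h0; apply hne; rw [h0, zero_smul])]
    exact Finset.sum_congr rfl fun i hi => by rw [heqz i hi]
  obtain ⟨K, hK1, hK2⟩ := combine_lemma M hM E w π hcc hloop t' wt (fun i => Iz i)
    ht'ne hpos' hind' 0
  refine ⟨K, hK1, ?_⟩
  rw [hx']
  simpa [hsum'] using hK2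

lemma polytope_mem_Icc (M : Matroid V) (x : V → ℝ) (hx : x ∈ matroidPolytope M) (v : V) :
    0 ≤ x v ∧ x v ≤ 1 := by
  have hconv : Convex ℝ (Set.pi Set.univ (fun _ : V => Set.Icc (0:ℝ) 1)) :=
    convex_pi (fun _ _ => convex_Icc 0 1)
  have hsub : matroidPolytope M ⊆ Set.pi Set.univ (fun _ : V => Set.Icc (0:ℝ) 1) := by
    apply convexHull_min _ hconv
    rintro y ⟨I, _, rfl⟩
    intro u _
    constructor
    · by_cases h : u ∈ I <;> simp [indVec, h]
    · by_cases h : u ∈ I <;> simp [indVec, h]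
  have := hsub hx v (Set.mem_univ v)
  exact ⟨this.1, this.2⟩
end Round

section Final
variable {V : Type*} [Fintype V] [DecidableEq V]

lemma Lfun_indVec (E : Finset (V × V)) (w : V × V → ℝ) (π : Finset V → ℝ) (I : Finset V) :
    Lfun E w π (indVec I) = Ffun E w π (indVec I) := by
  refine Finset.sum_congr rfl fun e _ => ?_
  by_cases h1 : e.1 ∈ I <;> by_cases h2 : e.2 ∈ I <;> simp [indVec, h1, h2] <;> norm_num

lemma per_edge {a b W1 W2 C : ℝ} (ha0 : 0 ≤ a) (ha1 : a ≤ 1) (hb0 : 0 ≤ b) (hb1 : b ≤ 1)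
    (hW1 : 0 ≤ W1) (hW2 : 0 ≤ W2) (hC : C ≤ 0) (hCW1 : 0 ≤ W1 + C) (hCW2 : 0 ≤ W2 + C) :
    3 / 4 * (a * W1 + b * W2 + max 0 (a + b - 1) * C) ≤ a * W1 + b * W2 + a * b * C := by
  rcases le_or_gt (a + b) 1 with hab | hab
  · rw [max_eq_left (by linarith)]
    have h1 : 0 ≤ a * (W1 + C) := mul_nonneg ha0 hCW1
    have h2 : 0 ≤ b * (W2 + C) := mul_nonneg hb0 hCW2
    have h3 : 0 ≤ (1 - (a + b)) * (a + b) * (-C) :=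
      mul_nonneg (mul_nonneg (by linarith) (by linarith)) (by linarith)
    have h4 : 0 ≤ (a - b) ^ 2 * (-C) := mul_nonneg (sq_nonneg _) (by linarith)
    nlinarith [h1, h2, h3, h4]
  · rw [max_eq_right (by linarith)]
    have h1 : 0 ≤ a * (W1 + C) := mul_nonneg ha0 hCW1
    have h2 : 0 ≤ b * (W2 + C) := mul_nonneg hb0 hCW2
    have h3 : 0 ≤ (a + b - 1) * (3 - (a + b)) * (-C) :=
      mul_nonneg (mul_nonneg (by linarith) (by linarith)) (by linarith)
    have h4 : 0 ≤ (a - b) ^ 2 * (-C) := mul_nonneg (sq_nonneg _) (by linarith)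
    nlinarith [h1, h2, h3, h4]

lemma Lfun_le_43_Ffun (E : Finset (V × V)) (w : V × V → ℝ) (π : Finset V → ℝ)
    (hpos : ∀ S : Finset V, 0 ≤ π S) (hsum : ∑ S : Finset V, π S = 1)
    (hw : ∀ e ∈ E, 0 ≤ w e) (x : V → ℝ) (hx : ∀ v, 0 ≤ x v ∧ x v ≤ 1) :
    (3 / 4) * Lfun E w π x ≤ Ffun E w π x := by
  rw [Lfun, Ffun, Finset.mul_sum]
  refine Finset.sum_le_sum fun e he => ?_
  have hwe := hw e he
  have hCW1 : 0 ≤ w e * (1 - marg π e.1) + ccE w π e := by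
    have h : w e * (1 - marg π e.1) + ccE w π e
        = w e * (marg π e.2 - marg2 π e.1 e.2) := by rw [ccE]; ring
    rw [h]
    exact mul_nonneg hwe (by linarith [marg2_le_right π hpos e.1 e.2])
  have hCW2 : 0 ≤ w e * (1 - marg π e.2) + ccE w π e := by
    have h : w e * (1 - marg π e.2) + ccE w π e
        = w e * (marg π e.1 - marg2 π e.1 e.2) := by rw [ccE]; ring
    rw [h]
    exact mul_nonneg hwe (by linarith [marg2_le_left π hpos e.1 e.2])
  have key := per_edge (hx e.1).1 (hx e.1).2 (hx e.2).1 (hx e.2).2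
    (mul_nonneg hwe (by linarith [marg_le_one π hpos hsum e.1]))
    (mul_nonneg hwe (by linarith [marg_le_one π hpos hsum e.2]))
    (ccE_nonpos π hpos hsum w e hwe) hCW1 hCW2
  rw [ccE] at key
  exact key

lemma Lfun_empty (E : Finset (V × V)) (w : V × V → ℝ) (π : Finset V → ℝ) :
    Lfun E w π (indVec (∅ : Finset V)) = 0 := by
  refine Finset.sum_eq_zero fun e _ => ?_
  simp [indVec]

end Final

/-- Integrality gap: every fractional `x` in the follower's matroid polytope can be rounded
to an independent set `Î` with `L^π(1_Î) = F^π(1_Î) ≥ (3/4)·L^π(x)`; consequently the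
LP value `Z^{LP} = sup_{x ∈ P_f} L^π(x)` and the ILP value
`Z^{ILP} = max_{I independent} L^π(1_I)` satisfy `(3/4)·Z^{LP} ≤ Z^{ILP} ≤ Z^{LP}`. -/
theorem integrality_gap {V : Type*} [Fintype V] [DecidableEq V]
    (M : Matroid V) (hM : M.E = Set.univ)
    (E : Finset (V × V)) (w : V × V → ℝ) (hw : ∀ e ∈ E, 0 ≤ w e)
    (hloop : ∀ e ∈ E, e.1 ≠ e.2) (hori : ∀ e ∈ E, (e.2, e.1) ∉ E)
    (π : Finset V → ℝ) (hpos : ∀ S : Finset V, 0 ≤ π S)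
    (hsum : ∑ S : Finset V, π S = 1) :
    (∀ x ∈ matroidPolytope M, ∃ I : Finset V, M.Indep ↑I ∧
        Lfun E w π (indVec I) = Ffun E w π (indVec I) ∧
        (3 / 4) * Lfun E w π x ≤ Lfun E w π (indVec I)) ∧
    (3 / 4) * sSup (Lfun E w π '' matroidPolytope M)
        ≤ sSup {r : ℝ | ∃ I : Finset V, M.Indep ↑I ∧ r = Lfun E w π (indVec I)} ∧
    sSup {r : ℝ | ∃ I : Finset V, M.Indep ↑I ∧ r = Lfun E w π (indVec I)}
        ≤ sSup (Lfun E w π '' matroidPolytope M) := by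
  have hcc : ∀ e ∈ E, ccE w π e ≤ 0 := fun e he => ccE_nonpos π hpos hsum w e (hw e he)
  have part1 : ∀ x ∈ matroidPolytope M, ∃ I : Finset V, M.Indep ↑I ∧
      Lfun E w π (indVec I) = Ffun E w π (indVec I) ∧
      (3 / 4) * Lfun E w π x ≤ Lfun E w π (indVec I) := by
    intro x hx
    obtain ⟨K, hK, hFK⟩ := round_lemma M hM E w π hcc hloop x hx
    refine ⟨K, hK, Lfun_indVec E w π K, ?_⟩
    have h34 := Lfun_le_43_Ffun E w π hpos hsum hw x (polytope_mem_Icc M x hx)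
    rw [Lfun_indVec E w π K]
    linarith
  have hemptyP : indVec (∅ : Finset V) ∈ matroidPolytope M :=
    subset_convexHull ℝ _ ⟨∅, by simpa using M.empty_indep, rfl⟩
  set A := Lfun E w π '' matroidPolytope M with hA
  set B := {r : ℝ | ∃ I : Finset V, M.Indep ↑I ∧ r = Lfun E w π (indVec I)} with hB
  have hBfin : B.Finite := by
    apply Set.Finite.subset (Set.finite_range (fun I : Finset V => Lfun E w π (indVec I)))
    rintro r ⟨I, _, rfl⟩
    exact ⟨I, rfl⟩
  have hBbdd : BddAbove B := hBfin.bddAbove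
  have h0B : (0 : ℝ) ∈ B := ⟨∅, by simpa using M.empty_indep, (Lfun_empty E w π).symm⟩
  have hBne : B.Nonempty := ⟨0, h0B⟩
  have hsupB0 : (0 : ℝ) ≤ sSup B := le_csSup hBbdd h0B
  have hAub : ∀ a ∈ A, a ≤ 4 / 3 * sSup B := by
    rintro a ⟨x, hx, rfl⟩
    obtain ⟨I, hI, _, hineq⟩ := part1 x hx
    have hle : Lfun E w π (indVec I) ≤ sSup B := le_csSup hBbdd ⟨I, hI, rfl⟩
    linarith
  have hAne : A.Nonempty := ⟨_, ⟨indVec (∅ : Finset V), hemptyP, rfl⟩⟩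
  have hAbdd : BddAbove A := ⟨4 / 3 * sSup B, fun a ha => hAub a ha⟩
  have hsupA : sSup A ≤ 4 / 3 * sSup B := csSup_le hAne hAub
  refine ⟨part1, by linarith, ?_⟩
  apply csSup_le hBne
  rintro r ⟨I, hI, rfl⟩
  exact le_csSup hAbdd ⟨indVec I, subset_convexHull ℝ _ ⟨I, hI, rfl⟩, rfl⟩
end

section
/- For every integer k ≥ 1 one has C(2k, 2) / (k·(2k − 1) − C(k, 2)) = (4k − 2)/(3k − 1), and this ratio tends to 4/3 as k → ∞. Hence the integrality gap of 4/3 for the LP relaxation of the follower's problem is asymptotically tight. -/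
lemma ig_eq (k : ℕ) (hk : 1 ≤ k) :
    (((2 * k).choose 2 : ℝ)) / ((k : ℝ) * (2 * (k : ℝ) - 1) - ((k.choose 2 : ℕ) : ℝ))
      = (4 * (k : ℝ) - 2) / (3 * (k : ℝ) - 1) := by
  have hk' : (1 : ℝ) ≤ (k : ℝ) := by exact_mod_cast hk
  have h1 : ((2 * k).choose 2 : ℝ) = (2 * (k:ℝ)) * (2 * (k:ℝ) - 1) / 2 := by
    rw [Nat.cast_choose_two]; push_cast; ring
  have h2 : ((k.choose 2 : ℕ) : ℝ) = (k : ℝ) * ((k : ℝ) - 1) / 2 :=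
    Nat.cast_choose_two (K := ℝ) k
  rw [h1, h2]
  have hden : (0:ℝ) < 3 * (k:ℝ) - 1 := by linarith
  have hkpos : (0 : ℝ) < k := by linarith
  rw [div_eq_div_iff (by nlinarith) (by linarith)]
  ring

/-- Tightness of the `4/3` integrality gap: for every `k ≥ 1`,
`C(2k,2) / (k·(2k − 1) − C(k,2)) = (4k − 2)/(3k − 1)`, and this ratio tends to `4/3`
as `k → ∞`. -/
theorem integrality_gap_tight :
    (∀ k : ℕ, 1 ≤ k →
      (((2 * k).choose 2 : ℝ)) / ((k : ℝ) * (2 * (k : ℝ) - 1) - ((k.choose 2 : ℕ) : ℝ))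
        = (4 * (k : ℝ) - 2) / (3 * (k : ℝ) - 1)) ∧
    Filter.Tendsto
      (fun k : ℕ =>
        (((2 * k).choose 2 : ℝ)) / ((k : ℝ) * (2 * (k : ℝ) - 1) - ((k.choose 2 : ℕ) : ℝ)))
      Filter.atTop (nhds (4 / 3)) := by
  constructor
  · exact ig_eq
  · have h : Filter.Tendsto (fun k : ℕ => (4 * (k : ℝ) - 2) / (3 * (k : ℝ) - 1))
        Filter.atTop (nhds (4 / 3)) := by
      have h1 : Filter.Tendsto (fun k : ℕ => (1 : ℝ) / (k : ℝ)) Filter.atTop (nhds 0) :=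
        tendsto_one_div_atTop_nhds_zero_nat
      have h4 : Filter.Tendsto (fun k : ℕ => (4 : ℝ) - 2 * (1 / (k : ℝ)))
          Filter.atTop (nhds 4) := by
        simpa using (tendsto_const_nhds (x := (4:ℝ))).sub
          ((tendsto_const_nhds (x := (2:ℝ))).mul h1)
      have h3 : Filter.Tendsto (fun k : ℕ => (3 : ℝ) - 1 * (1 / (k : ℝ)))
          Filter.atTop (nhds 3) := by
        simpa using (tendsto_const_nhds (x := (3:ℝ))).sub
          ((tendsto_const_nhds (x := (1:ℝ))).mul h1)
      have hlim := h4.div h3 (by norm_num)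
      norm_num at hlim
      refine hlim.congr' ?_
      filter_upwards [Filter.eventually_ge_atTop 1] with k hk
      have hkpos : (0 : ℝ) < k := by exact_mod_cast hk
      simp only [Pi.div_apply]
      field_simp
    refine h.congr' ?_
    filter_upwards [Filter.eventually_ge_atTop 1] with k hk
    exact (ig_eq k hk).symm
end
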